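/- arXiv:2401.15887 — 6 statements merged into one kernel-verified Lean document; each statement's English description precedes it below -/
import Mathlib

section
/- Let F : ℕ → K be a holonomic sequence over a field K of characteristic 0 and let L = Σ_{i=0}^J a_i(n)σ^i (a_i ∈ K[n], L ≠ 0) be an annihilator of F. Then there exists a nonzero polynomial p(n) ∈ K[n] such that p(n)F(n) is summable and deg p(n) ≤ deg L + C_L, where deg L is the degree of L and C_L is the continued zero index of L. (Indeed p(n) = L*(n^{C_L}) works.) -/
open Polynomial Finset

/-- The polynomials `b_k(n) = ∑_{j=k}^J binom(j,k) a_{J-j}(n+j-J)` attached to the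
operator `L = ∑_{i=0}^J a_i(n) σ^i`. -/
noncomputable def bPoly {K : Type*} [Field K] (J : ℕ) (a : ℕ → K[X]) (k : ℕ) : K[X] :=
  ∑ j ∈ Finset.Icc k J, (j.choose k : K) • (a (J - j)).comp (X + C ((j : K) - (J : K)))

/-- The degree of the operator `L = ∑_{i=0}^J a_i(n) σ^i`:
`deg L = max_{0 ≤ k ≤ J} (deg b_k(n) - k)`, an element of `WithBot ℤ`
(the zero polynomial having degree `⊥ = -∞`). -/
noncomputable def opDegree {K : Type*} [Field K] (J : ℕ) (a : ℕ → K[X]) : WithBot ℤ :=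
  (Finset.range (J + 1)).sup fun k =>
    WithBot.map (fun d : ℕ => (d : ℤ) - (k : ℤ)) (bPoly J a k).degree

/-- The adjoint `L*` applied to a polynomial `x`:
`L*(x)(n) = ∑_{i=0}^J a_i(n-i) x(n-i)`. -/
noncomputable def adjointApply {K : Type*} [Field K] (J : ℕ) (a : ℕ → K[X]) (x : K[X]) : K[X] :=
  ∑ i ∈ Finset.range (J + 1), ((a i).comp (X - C (i : K))) * (x.comp (X - C (i : K)))

/-- The continued zero index `C_L`: the least `c ∈ ℕ` with `L*(n^c) ≠ 0`. -/
noncomputable def contZeroIndex {K : Type*} [Field K] (J : ℕ) (a : ℕ → K[X]) : ℕ :=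
  sInf {c : ℕ | adjointApply J a (X ^ c) ≠ 0}

/-- The operator `L = ∑_{i=0}^J a_i(n) σ^i` annihilates the sequence `F` if
`∑_{i=0}^J a_i(n) F(n+i) = 0` for all `n ∈ ℕ`. -/
def Annihilates {K : Type*} [Field K] (J : ℕ) (a : ℕ → K[X]) (F : ℕ → K) : Prop :=
  ∀ n : ℕ, ∑ i ∈ Finset.range (J + 1), (a i).eval (n : K) * F (n + i) = 0

/-- `F` is holonomic: it admits a nonzero annihilating operator. -/
def Holonomic {K : Type*} [Field K] (F : ℕ → K) : Prop :=
  ∃ (J : ℕ) (a : ℕ → K[X]), (∃ i ≤ J, a i ≠ 0) ∧ Annihilates J a F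

/-- `F` has order `J`: `J` is the minimal order of a nonzero annihilator of `F`. -/
def HasOrder {K : Type*} [Field K] (F : ℕ → K) (J : ℕ) : Prop :=
  (∃ a : ℕ → K[X], (∃ i ≤ J, a i ≠ 0) ∧ Annihilates J a F) ∧
    ∀ J' < J, ∀ a : ℕ → K[X], (∃ i ≤ J', a i ≠ 0) → ¬ Annihilates J' a F

/-- `(num(n)/den(n))·F(n)` is summable: there are rational functions
`u_i = u i / v i`, `0 ≤ i ≤ J-1`, such that
`num(n)/den(n) · F(n) = ∑_i u_i(n+1) F(n+1+i) - ∑_i u_i(n) F(n+i)`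
for all `n` at which all rational functions involved are defined. -/
def IsSummableRat {K : Type*} [Field K] (J : ℕ) (F : ℕ → K) (num den : K[X]) : Prop :=
  ∃ u v : ℕ → K[X], (∀ i < J, v i ≠ 0) ∧ ∀ n : ℕ,
    den.eval (n : K) ≠ 0 →
    (∀ i < J, (v i).eval (n : K) ≠ 0 ∧ (v i).eval ((n : K) + 1) ≠ 0) →
    num.eval (n : K) / den.eval (n : K) * F n =
      (∑ i ∈ Finset.range J,
          (u i).eval ((n : K) + 1) / (v i).eval ((n : K) + 1) * F (n + 1 + i)) -
        ∑ i ∈ Finset.range J, (u i).eval (n : K) / (v i).eval (n : K) * F (n + i)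

/-- The coefficient of `n^m` in a polynomial, for an integer index `m`
(zero for negative `m`). -/
noncomputable def coeffZ {K : Type*} [Field K] (b : K[X]) (m : ℤ) : K :=
  if 0 ≤ m then b.coeff m.toNat else 0

/-- The value `f(s) = ∑_{k=0}^J [n^{d+k}](b_k(n)) · s(s-1)⋯(s-k+1)`, where `d = deg L`. -/
noncomputable def fVal {K : Type*} [Field K] (J : ℕ) (a : ℕ → K[X]) (s : ℕ) : K :=
  ∑ k ∈ Finset.range (J + 1),
    coeffZ (bPoly J a k) ((opDegree J a).unbotD 0 + (k : ℤ)) *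
      ∏ j ∈ Finset.range k, ((s : K) - (j : K))

/-- `L` is nondegenerated if `f(s)` has no root in `ℕ`. -/
def Nondegenerated {K : Type*} [Field K] (J : ℕ) (a : ℕ → K[X]) : Prop :=
  ∀ s : ℕ, fVal J a s ≠ 0

/-- `d_L = max_{0 ≤ i ≤ J} deg a_i(n)`. -/
noncomputable def dLdeg {K : Type*} [Field K] (J : ℕ) (a : ℕ → K[X]) : ℕ :=
  (Finset.range (J + 1)).sup fun i => (a i).natDegree


section Aux

variable {K : Type*} [Field K]

noncomputable def deltaE (K : Type*) [Field K] : Module.End K K[X] :=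
  (taylor (1:K) : Module.End K K[X]) - 1

noncomputable def Dz {K : Type*} [Field K] (q : K[X]) : WithBot ℤ :=
  q.degree.map (Nat.cast : ℕ → ℤ)

lemma Dz_zero : Dz (0 : K[X]) = ⊥ := by simp [Dz]

lemma Dz_eq_natDegree {q : K[X]} (hq : q ≠ 0) : Dz q = ((q.natDegree : ℤ) : WithBot ℤ) := by
  rw [Dz, degree_eq_natDegree hq]; rfl

lemma Dz_le_of_degree_le {n : ℕ} {q : K[X]} (h : (n : WithBot ℕ) ≤ q.degree) :
    ((n : ℤ) : WithBot ℤ) ≤ Dz q := by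
  cases hd : q.degree with
  | bot => rw [hd] at h; exact absurd h (by simp)
  | coe m =>
    rw [hd] at h
    have : n ≤ m := WithBot.coe_le_coe.mp h
    simp only [Dz, hd, WithBot.map_coe]
    exact_mod_cast WithBot.coe_le_coe.mpr (by exact_mod_cast this)

lemma taylor_ne_zero' {r : K} {q : K[X]} (hq : q ≠ 0) : taylor r q ≠ 0 := by
  intro h
  have : taylor (-r) (taylor r q) = q := by rw [taylor_taylor]; simp [taylor_zero']
  rw [h, map_zero] at this
  exact hq this.symm

lemma Dz_taylor (r : K) (q : K[X]) : Dz (taylor r q) = Dz q := by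
  by_cases hq : q = 0
  · simp [hq]
  · rw [Dz_eq_natDegree (taylor_ne_zero' hq), Dz_eq_natDegree hq, natDegree_taylor]

lemma Dz_mul_le (u v : K[X]) : Dz (u * v) ≤ Dz u + Dz v := by
  by_cases hu : u = 0
  · simp [hu, Dz_zero]
  by_cases hv : v = 0
  · simp [hv, Dz_zero]
  rw [Dz_eq_natDegree (mul_ne_zero hu hv), Dz_eq_natDegree hu, Dz_eq_natDegree hv,
    natDegree_mul hu hv]
  rw [← WithBot.coe_add]
  exact_mod_cast le_refl _

lemma Dz_sum_le {s : Finset ℕ} {f : ℕ → K[X]} {R : WithBot ℤ}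
    (h : ∀ k ∈ s, Dz (f k) ≤ R) : Dz (∑ k ∈ s, f k) ≤ R := by
  by_cases hp : (∑ k ∈ s, f k) = 0
  · simp [hp, Dz_zero]
  rw [Dz_eq_natDegree hp]
  have h1 : ((∑ k ∈ s, f k).natDegree : WithBot ℕ) ≤ s.sup fun k => (f k).degree := by
    rw [← degree_eq_natDegree hp]; exact degree_sum_le s f
  obtain ⟨k, hk, hle⟩ := Finset.le_sup_iff (by exact (WithBot.bot_lt_coe _)) |>.mp h1
  exact le_trans (Dz_le_of_degree_le hle) (h k hk)

lemma Dz_delta_le (x : K[X]) : Dz (deltaE K x) ≤ Dz x + ((-1 : ℤ) : WithBot ℤ) := by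
  have hde : deltaE K x = taylor (1:K) x - x := by
    simp [deltaE, LinearMap.sub_apply]
  by_cases h0 : deltaE K x = 0
  · simp [h0, Dz_zero]
  by_cases hx : x = 0
  · exfalso; apply h0; rw [hde, hx]; simp
  by_cases hnd : x.natDegree = 0
  · exfalso; apply h0
    obtain ⟨c, rfl⟩ := natDegree_eq_zero.mp hnd
    rw [hde, taylor_apply, C_comp, sub_self]
  have hT : (taylor (1:K) x).degree = x.degree := by
    rw [degree_eq_natDegree (taylor_ne_zero' hx), degree_eq_natDegree hx, natDegree_taylor]
  have hlc : (taylor (1:K) x).leadingCoeff = x.leadingCoeff := by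
    rw [taylor_apply, leadingCoeff_comp (by rw [natDegree_X_add_C]; norm_num)]
    rw [(monic_X_add_C (1:K)).leadingCoeff, one_pow, mul_one]
  have hlt : (deltaE K x).degree < x.degree := by
    rw [hde]
    exact lt_of_lt_of_le (degree_sub_lt hT (taylor_ne_zero' hx) hlc) (le_of_eq hT)
  rw [degree_eq_natDegree h0, degree_eq_natDegree hx] at hlt
  have : (deltaE K x).natDegree < x.natDegree := by exact_mod_cast hlt
  rw [Dz_eq_natDegree h0, Dz_eq_natDegree hx, ← WithBot.coe_add]
  exact_mod_cast WithBot.coe_le_coe.mpr (by push_cast; omega)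

lemma Dz_delta_pow_le (x : K[X]) (k : ℕ) :
    Dz (((deltaE K)^k) x) ≤ Dz x + ((-(k:ℤ) : ℤ) : WithBot ℤ) := by
  induction k with
  | zero => simp
  | succ k ih =>
    rw [pow_succ', Module.End.mul_apply]
    have h3 : (-(((k+1:ℕ)):ℤ)) = -((k:ℤ)+1) := by push_cast; ring
    have h2 : ((-((k:ℤ)+1) : ℤ) : WithBot ℤ)
        = ((-(k:ℤ) : ℤ) : WithBot ℤ) + ((-1 : ℤ) : WithBot ℤ) := by
      rw [← WithBot.coe_add]; norm_num [add_comm]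
    rw [h3, h2, ← add_assoc]
    exact le_trans (Dz_delta_le _) (add_le_add_left ih _)

lemma taylor_nat_pow (x : K[X]) :
    ∀ j : ℕ, ((taylor (1:K) : Module.End K K[X])^j) x = taylor ((j:ℕ):K) x := by
  intro j
  induction j with
  | zero => simp [taylor_zero']
  | succ j ih =>
    rw [pow_succ', Module.End.mul_apply, ih, taylor_taylor]
    norm_num [add_comm]

lemma newton_expand (x : K[X]) (j : ℕ) :
    taylor ((j:ℕ):K) x = ∑ k ∈ range (j+1), (j.choose k : K) • ((deltaE K)^k) x := by
  rw [← taylor_nat_pow]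
  have hT : (taylor (1:K) : Module.End K K[X]) = deltaE K + 1 := by
    simp [deltaE]
  rw [hT, Commute.add_pow (Commute.one_right _) j]
  rw [LinearMap.sum_apply]
  refine Finset.sum_congr rfl fun k hk => ?_
  rw [one_pow, mul_one, Module.End.mul_apply, Module.End.natCast_apply, map_nsmul]
  rw [Nat.cast_smul_eq_nsmul]

lemma adjoint_eq_sum_bpoly (J : ℕ) (a : ℕ → K[X]) (x : K[X]) :
    adjointApply J a x
      = ∑ k ∈ range (J+1), bPoly J a k * (taylor (-(J:K)) (((deltaE K)^k) x)) := by
  have hrhs : ∀ k, bPoly J a k * (taylor (-(J:K)) (((deltaE K)^k) x))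
      = ∑ j ∈ Finset.Icc k J, (j.choose k : K) •
          ((a (J - j)).comp (X + C ((j : K) - (J : K))) * taylor (-(J:K)) (((deltaE K)^k) x)) := by
    intro k
    rw [bPoly, Finset.sum_mul]
    exact Finset.sum_congr rfl fun j hj => smul_mul_assoc _ _ _
  simp only [hrhs]
  rw [Finset.sum_comm' (t' := range (J+1)) (s' := fun j => range (j+1))
    (by intro k j; simp only [Finset.mem_range, Finset.mem_Icc]; omega)]
  have hinner : ∀ j ∈ range (J+1),
      (∑ k ∈ range (j+1), (j.choose k : K) •
        ((a (J - j)).comp (X + C ((j : K) - (J : K))) * taylor (-(J:K)) (((deltaE K)^k) x)))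
      = (a (J - j)).comp (X + C ((j : K) - (J : K))) * x.comp (X + C ((j : K) - (J : K))) := by
    intro j hj
    have : ∑ k ∈ range (j+1), (j.choose k : K) •
        ((a (J - j)).comp (X + C ((j : K) - (J : K))) * taylor (-(J:K)) (((deltaE K)^k) x))
        = (a (J - j)).comp (X + C ((j : K) - (J : K))) *
            taylor (-(J:K)) (∑ k ∈ range (j+1), (j.choose k : K) • ((deltaE K)^k) x) := by
      rw [map_sum, Finset.mul_sum]
      refine Finset.sum_congr rfl fun k hk => ?_
      rw [map_smul, mul_smul_comm]
    rw [this, ← newton_expand, taylor_taylor, taylor_apply]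
    congr 2
    ring
  rw [Finset.sum_congr rfl hinner]
  rw [adjointApply, ← Finset.sum_range_reflect]
  refine Finset.sum_congr rfl fun j hj => ?_
  simp only [Finset.mem_range] at hj
  have hj' : j ≤ J := by omega
  have h1 : (J + 1 - 1 - j) = J - j := by omega
  have h2 : (X : K[X]) - C (((J - j : ℕ)):K) = X + C ((j:K) - (J:K)) := by
    rw [Nat.cast_sub hj', sub_eq_add_neg, ← C_neg, neg_sub]
  rw [h1, h2]

lemma adjoint_eval (J : ℕ) (a : ℕ → K[X]) (x : K[X]) (t : K) :
    (adjointApply J a x).eval t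
      = ∑ i ∈ range (J+1), (a i).eval (t - i) * x.eval (t - i) := by
  simp [adjointApply, eval_finset_sum, eval_comp]

lemma adjoint_zero_all (J : ℕ) (a : ℕ → K[X])
    (h : ∀ c : ℕ, adjointApply J a (X ^ c) = 0) (x : K[X]) : adjointApply J a x = 0 := by
  induction x using Polynomial.induction_on' with
  | add p q hp hq =>
    have : adjointApply J a (p + q) = adjointApply J a p + adjointApply J a q := by
      simp [adjointApply, add_comp, mul_add, Finset.sum_add_distrib]
    rw [this, hp, hq, add_zero]
  | monomial n c =>
    have hm : (monomial n c : K[X]) = c • X ^ n := by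
      rw [smul_X_eq_monomial]
    have hs : adjointApply J a (c • X ^ n) = c • adjointApply J a (X ^ n) := by
      simp [adjointApply, smul_comp, mul_smul_comm, Finset.smul_sum]
    rw [hm, hs, h n, smul_zero]

lemma exists_adjoint_pow_ne [CharZero K] (J : ℕ) (a : ℕ → K[X])
    (hL : ∃ i ≤ J, a i ≠ 0) : ∃ c : ℕ, adjointApply J a (X ^ c) ≠ 0 := by
  by_contra hcon
  push_neg at hcon
  obtain ⟨i₀, hi₀J, hai₀⟩ := hL
  apply hai₀
  apply Polynomial.funext
  intro s
  rw [eval_zero]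
  set t : K := s + i₀ with ht
  set x : K[X] := ∏ j ∈ (range (J+1)).erase i₀, (X - C (t - (j:K))) with hx
  have h0 := adjoint_zero_all J a hcon x
  have h1 : (adjointApply J a x).eval t = 0 := by rw [h0, eval_zero]
  rw [adjoint_eval] at h1
  have hmem : i₀ ∈ range (J+1) := Finset.mem_range.mpr (by omega)
  have hsingle : ∑ i ∈ range (J+1), (a i).eval (t - i) * x.eval (t - i)
      = (a i₀).eval (t - i₀) * x.eval (t - i₀) := by
    refine Finset.sum_eq_single_of_mem i₀ hmem fun i hi hne => ?_
    have : x.eval (t - i) = 0 := by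
      rw [hx, eval_prod]
      refine Finset.prod_eq_zero (Finset.mem_erase.mpr ⟨hne, hi⟩) ?_
      simp
    rw [this, mul_zero]
  rw [hsingle] at h1
  have hprod : x.eval (t - i₀) ≠ 0 := by
    rw [hx, eval_prod]
    refine Finset.prod_ne_zero_iff.mpr fun j hj => ?_
    obtain ⟨hne, _⟩ := Finset.mem_erase.mp hj
    simp only [eval_sub, eval_X, eval_C]
    intro hzero
    have hji : (j : K) = (i₀ : K) := by
      have h' : (j:K) - (i₀:K) = 0 := by linear_combination hzero
      exact sub_eq_zero.mp h'
    exact hne (by exact_mod_cast hji)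
  have : (a i₀).eval (t - i₀) = 0 := by
    rcases mul_eq_zero.mp h1 with h | h
    · exact h
    · exact absurd h hprod
  rw [ht] at this
  convert this using 2
  · rfl
  ring

noncomputable def uu {K : Type*} [Field K] (J : ℕ) (a : ℕ → K[X]) (x : K[X]) (m : ℕ) : K[X] :=
  -(∑ i ∈ Finset.Icc (m+1) J, ((a i * x).comp (X + C ((m:K) - (i:K)))))

lemma key_sum (J : ℕ) (a : ℕ → K[X]) (x : K[X]) (F : ℕ → K)
    (hann : ∀ n : ℕ, ∑ i ∈ range (J+1), (a i).eval (n:K) * F (n+i) = 0) (n : ℕ) :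
    (adjointApply J a x).eval (n:K) * F n =
      (∑ m ∈ range J, (uu J a x m).eval ((n:K)+1) * F (n+1+m))
        - ∑ m ∈ range J, (uu J a x m).eval (n:K) * F (n+m) := by
  set h : ℕ → ℕ → K := fun i r => (a i * x).eval ((r:K)-(i:K)) * F r with hh
  have hu : ∀ (r : ℕ) (m : ℕ), (uu J a x m).eval (r:K) * F (r+m)
      = -∑ i ∈ Finset.Icc (m+1) J, h i (r+m) := by
    intro r m
    rw [uu, eval_neg, eval_finset_sum, neg_mul, Finset.sum_mul]
    congr 1
    refine Finset.sum_congr rfl fun i hi => ?_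
    rw [eval_comp, eval_add, eval_X, eval_C]
    have hpt : (r:K) + ((m:K) - (i:K)) = (((r+m:ℕ)):K) - (i:K) := by push_cast; ring
    rw [hpt]
  set G : ℕ → K := fun r => ∑ m ∈ range J, ∑ i ∈ Finset.Icc (m+1) J, h i (r+m) with hG
  have hRHS : (∑ m ∈ range J, (uu J a x m).eval ((n:K)+1) * F (n+1+m))
        - ∑ m ∈ range J, (uu J a x m).eval (n:K) * F (n+m) = G n - G (n+1) := by
    have c1 : ∀ m, (uu J a x m).eval ((n:K)+1) * F (n+1+m)
        = -∑ i ∈ Finset.Icc (m+1) J, h i ((n+1)+m) := by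
      intro m
      have := hu (n+1) m
      push_cast at this ⊢
      rw [this]
    have c2 : ∀ m, (uu J a x m).eval (n:K) * F (n+m)
        = -∑ i ∈ Finset.Icc (m+1) J, h i (n+m) := hu n
    simp only [c1, c2, Finset.sum_neg_distrib]
    rw [hG]
    ring
  rw [hRHS]
  have hswap : ∀ r : ℕ, G r = ∑ i ∈ range (J+1), ∑ m ∈ range i, h i (r+m) := by
    intro r
    rw [hG]
    exact Finset.sum_comm' (by intro m i; simp only [Finset.mem_range, Finset.mem_Icc]; omega)
  rw [hswap, hswap]
  rw [← Finset.sum_sub_distrib]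
  have htel : ∀ i : ℕ, (∑ m ∈ range i, h i (n+m)) - ∑ m ∈ range i, h i ((n+1)+m)
      = h i n - h i (n+i) := by
    intro i
    rw [← Finset.sum_sub_distrib]
    have : ∀ m, h i (n+m) - h i ((n+1)+m) = h i (n+m) - h i (n+(m+1)) := by
      intro m; congr 2; omega
    rw [Finset.sum_congr rfl fun m _ => this m]
    have := Finset.sum_range_sub' (fun m => h i (n+m)) i
    simpa using this
  rw [Finset.sum_congr rfl fun i _ => htel i]
  rw [Finset.sum_sub_distrib]
  have hz : ∑ i ∈ range (J+1), h i (n+i) = 0 := by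
    have : ∀ i, h i (n+i) = x.eval (n:K) * ((a i).eval (n:K) * F (n+i)) := by
      intro i
      simp only [hh]
      have hpt : (((n+i:ℕ)):K) - (i:K) = (n:K) := by push_cast; ring
      rw [hpt, eval_mul]
      ring
    rw [Finset.sum_congr rfl fun i _ => this i, ← Finset.mul_sum, hann n, mul_zero]
  have hp : ∑ i ∈ range (J+1), h i n = (adjointApply J a x).eval (n:K) * F n := by
    rw [adjoint_eval, Finset.sum_mul]
    refine Finset.sum_congr rfl fun i _ => ?_
    simp only [hh]
    rw [eval_mul]
  rw [hz, hp, sub_zero]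

end Aux

/-- If `F` is holonomic and `L = ∑_{i=0}^J a_i(n) σ^i ≠ 0` annihilates `F`,
then there is a nonzero polynomial `p` such that `p(n)F(n)` is summable and
`deg p ≤ deg L + C_L`; indeed `p = L*(n^{C_L})` works. -/
theorem upper_bound_summable_polynomial {K : Type*} [Field K] [CharZero K]
    (F : ℕ → K) (hF : Holonomic F) (J : ℕ) (a : ℕ → K[X])
    (hL : ∃ i ≤ J, a i ≠ 0) (hann : Annihilates J a F) :
    ∃ p : K[X], p ≠ 0 ∧ IsSummableRat J F p 1 ∧
      ((p.natDegree : ℤ) : WithBot ℤ) ≤ opDegree J a + ((contZeroIndex J a : ℤ) : WithBot ℤ) ∧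
      p = adjointApply J a (X ^ contZeroIndex J a) := by
  classical
  set c₀ : ℕ := contZeroIndex J a with hc₀
  set p : K[X] := adjointApply J a (X ^ c₀) with hp
  have hne : {c : ℕ | adjointApply J a (X ^ c) ≠ 0}.Nonempty :=
    exists_adjoint_pow_ne J a hL
  have hp0 : p ≠ 0 := by
    have := Nat.sInf_mem hne
    rw [hp, hc₀, contZeroIndex]
    exact this
  refine ⟨p, hp0, ?_, ?_, rfl⟩
  · -- summability
    refine ⟨uu J a (X ^ c₀), fun _ => 1, fun i _ => one_ne_zero, fun n _ _ => ?_⟩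
    simp only [eval_one, div_one]
    exact key_sum J a (X ^ c₀) F hann n
  · -- degree bound
    have hk_bound : ∀ k ∈ range (J+1),
        Dz (bPoly J a k * taylor (-(J:K)) (((deltaE K)^k) ((X:K[X]) ^ c₀)))
          ≤ opDegree J a + ((c₀:ℤ) : WithBot ℤ) := by
      intro k hk
      refine le_trans (Dz_mul_le _ _) ?_
      rw [Dz_taylor]
      by_cases hb : bPoly J a k = 0
      · simp [hb, Dz_zero]
      have h1 : Dz (((deltaE K)^k) ((X:K[X]) ^ c₀)) ≤ (((c₀:ℤ) - k : ℤ) : WithBot ℤ) := by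
        refine le_trans (Dz_delta_pow_le _ _) ?_
        have hX : Dz ((X:K[X])^c₀) = ((c₀:ℤ) : WithBot ℤ) := by
          rw [Dz, degree_X_pow]; rfl
        rw [hX, ← WithBot.coe_add]
        exact le_of_eq (by norm_num [sub_eq_add_neg])
      have h2 : ((((bPoly J a k).natDegree : ℤ) - k : ℤ) : WithBot ℤ) ≤ opDegree J a := by
        have hle := Finset.le_sup
          (f := fun k' : ℕ => WithBot.map (fun d : ℕ => (d:ℤ) - (k':ℤ)) (bPoly J a k').degree) hk
        rw [degree_eq_natDegree hb] at hle
        rw [show (((bPoly J a k).natDegree : ℕ) : WithBot ℕ) = WithBot.some (bPoly J a k).natDegree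
          from rfl, WithBot.map_coe] at hle
        exact hle
      calc Dz (bPoly J a k) + Dz (((deltaE K)^k) ((X:K[X]) ^ c₀))
          ≤ (((bPoly J a k).natDegree : ℤ) : WithBot ℤ) + (((c₀:ℤ) - k : ℤ) : WithBot ℤ) :=
            add_le_add (le_of_eq (Dz_eq_natDegree hb)) h1
        _ = ((((bPoly J a k).natDegree : ℤ) - k : ℤ) : WithBot ℤ) + ((c₀:ℤ) : WithBot ℤ) := by
            rw [← WithBot.coe_add, ← WithBot.coe_add]
            congr 1
            ring
        _ ≤ opDegree J a + ((c₀:ℤ) : WithBot ℤ) := add_le_add h2 le_rfl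
    have hdz : Dz p ≤ opDegree J a + ((c₀:ℤ) : WithBot ℤ) := by
      rw [hp, adjoint_eq_sum_bpoly J a ((X:K[X]) ^ c₀)]
      exact Dz_sum_le hk_bound
    rw [← Dz_eq_natDegree hp0] at *
    exact hdz
end

section
/- Let L = Σ_{i=0}^J a_i(n)σ^i be a nonzero operator with polynomial coefficients over a field K of characteristic 0. If L is nondegenerated, then the continued zero index of L is 0, i.e., L*(1) ≠ 0. -/
open Polynomial Finset

lemma adjointApply_one_eq_bPoly_zero {K : Type*} [Field K] (J : ℕ) (a : ℕ → K[X]) :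
    adjointApply J a 1 = bPoly J a 0 := by
  unfold adjointApply bPoly
  have hIcc : Finset.Icc 0 J = Finset.range (J + 1) := by
    rw [Finset.range_eq_Ico, Finset.Ico_add_one_right_eq_Icc]
  rw [hIcc]
  rw [← Finset.sum_range_reflect
    (fun j => (j.choose 0 : K) • (a (J - j)).comp (X + C ((j : K) - (J : K)))) (J + 1)]
  refine Finset.sum_congr rfl fun i hi => ?_
  have hi' : i ≤ J := Nat.lt_succ_iff.mp (Finset.mem_range.mp hi)
  have h1 : J + 1 - 1 - i = J - i := by omega
  have h2 : J - (J - i) = i := by omega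
  have h3 : ((J - i : ℕ) : K) - (J : K) = -(i : K) := by
    rw [Nat.cast_sub hi']; ring
  simp [h1, h2, h3, Polynomial.one_comp, sub_eq_add_neg]

lemma fVal_zero_eq {K : Type*} [Field K] [CharZero K] (J : ℕ) (a : ℕ → K[X]) :
    fVal J a 0 = coeffZ (bPoly J a 0) ((opDegree J a).unbotD 0) := by
  unfold fVal
  rw [Finset.sum_eq_single 0]
  · simp
  · intro k hk hk0
    have : ∏ j ∈ Finset.range k, (((0 : ℕ) : K) - (j : K)) = 0 := by
      apply Finset.prod_eq_zero (Finset.mem_range.mpr (Nat.pos_of_ne_zero hk0))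
      simp
    rw [this, mul_zero]
  · intro h
    exact absurd (Finset.mem_range.mpr (Nat.succ_pos J)) h

/-- If the nonzero operator `L = ∑_{i=0}^J a_i(n) σ^i` is nondegenerated,
then its continued zero index is `0`, i.e. `L*(1) ≠ 0`. -/
theorem contZeroIndex_eq_zero_of_nondegenerated {K : Type*} [Field K] [CharZero K]
    (J : ℕ) (a : ℕ → K[X]) (hL : ∃ i ≤ J, a i ≠ 0) (hnd : Nondegenerated J a) :
    adjointApply J a 1 ≠ 0 ∧ contZeroIndex J a = 0 := by
  have h0 := hnd 0
  rw [fVal_zero_eq] at h0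
  have hb : bPoly J a 0 ≠ 0 := by
    intro hb
    apply h0
    rw [hb]
    unfold coeffZ
    split <;> simp
  have hadj : adjointApply J a 1 ≠ 0 := by
    rw [adjointApply_one_eq_bPoly_zero]; exact hb
  refine ⟨hadj, ?_⟩
  unfold contZeroIndex
  rw [Nat.sInf_eq_zero]
  left
  simpa using hadj
end

section
/- Let L = Σ_{i=0}^J a_i(n)σ^i be a nonzero operator with polynomial coefficients over a field K of characteristic 0 and set d_L = max_{0≤i≤J} deg a_i(n). Then deg L ≤ d_L, and if deg L = d_L then L is nondegenerated. -/
open Polynomial Finset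

lemma bPoly_degree_le {K : Type*} [Field K] (J : ℕ) (a : ℕ → K[X]) (k : ℕ) :
    (bPoly J a k).degree ≤ ((dLdeg J a : ℕ) : WithBot ℕ) := by
  unfold bPoly
  refine (Polynomial.degree_sum_le _ _).trans ?_
  rw [Finset.sup_le_iff]
  intro j hj
  refine (Polynomial.degree_smul_le _ _).trans ?_
  refine (Polynomial.degree_le_natDegree).trans ?_
  rw [Polynomial.natDegree_comp, Polynomial.natDegree_X_add_C, mul_one]
  exact_mod_cast Nat.cast_le.mpr (Finset.le_sup (f := fun i => (a i).natDegree)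
    (Finset.mem_range.mpr (Nat.lt_succ_of_le (Nat.sub_le J j))))

/-- For a nonzero operator `L = ∑_{i=0}^J a_i(n) σ^i` with
`d_L = max_{0 ≤ i ≤ J} deg a_i(n)`, one has `deg L ≤ d_L`, and if `deg L = d_L` then `L`
is nondegenerated. -/
theorem opDegree_le_dL_and_nondegenerated {K : Type*} [Field K] [CharZero K]
    (J : ℕ) (a : ℕ → K[X]) (hL : ∃ i ≤ J, a i ≠ 0) :
    opDegree J a ≤ ((dLdeg J a : ℤ) : WithBot ℤ) ∧
      (opDegree J a = ((dLdeg J a : ℤ) : WithBot ℤ) → Nondegenerated J a) := by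
  have hle : ∀ k : ℕ, WithBot.map (fun d : ℕ => (d : ℤ) - (k : ℤ)) (bPoly J a k).degree ≤
      ((dLdeg J a : ℤ) - (k : ℤ) : ℤ) := by
    intro k
    have hb := bPoly_degree_le J a k
    cases h : (bPoly J a k).degree with
    | bot => simp [h]
    | coe n =>
      rw [h] at hb
      have hn : (n : ℤ) ≤ (dLdeg J a : ℤ) := by exact_mod_cast WithBot.coe_le_coe.mp hb
      simp only [WithBot.map_coe, WithBot.coe_le_coe]
      omega
  constructor
  · refine Finset.sup_le fun k hk => (hle k).trans ?_
    exact WithBot.coe_le_coe.mpr (by omega)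
  · intro heq s
    obtain ⟨k, hk, hsup⟩ := Finset.exists_mem_eq_sup (Finset.range (J + 1))
      ⟨0, Finset.mem_range.mpr (Nat.succ_pos J)⟩
      (fun k => WithBot.map (fun d : ℕ => (d : ℤ) - (k : ℤ)) (bPoly J a k).degree)
    have hkval : WithBot.map (fun d : ℕ => (d : ℤ) - (k : ℤ)) (bPoly J a k).degree =
        ((dLdeg J a : ℤ) : WithBot ℤ) := by
      rw [← hsup, ← heq]; rfl
    have hb := hle k
    rw [hkval] at hb
    have hk0 : k = 0 := by
      have := WithBot.coe_le_coe.mp hb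
      omega
    subst hk0
    have hdeg0 : (bPoly J a 0).degree = ((dLdeg J a : ℕ) : WithBot ℕ) := by
      cases h : (bPoly J a 0).degree with
      | bot => rw [h] at hkval; simp at hkval
      | coe n =>
        rw [h] at hkval
        simp only [WithBot.map_coe, Nat.cast_zero, sub_zero, WithBot.coe_inj] at hkval
        have hn : n = dLdeg J a := by exact_mod_cast hkval
        exact congrArg (fun m : ℕ => (m : WithBot ℕ)) hn
    have hne : (bPoly J a 0).coeff (dLdeg J a) ≠ 0 := by
      have h0 : bPoly J a 0 ≠ 0 := fun h => by simp [h] at hdeg0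
      have : (bPoly J a 0).natDegree = dLdeg J a :=
        Polynomial.natDegree_eq_of_degree_eq_some hdeg0
      rw [← this]
      exact Polynomial.leadingCoeff_ne_zero.mpr h0
    have hunbot : (opDegree J a).unbotD 0 = (dLdeg J a : ℤ) := by rw [heq]; rfl
    unfold fVal
    rw [hunbot]
    rw [Finset.sum_eq_single 0]
    · simpa [coeffZ] using hne
    · intro k hk hkne
      have hcz : coeffZ (bPoly J a k) ((dLdeg J a : ℤ) + (k : ℤ)) = 0 := by
        unfold coeffZ
        rw [if_pos (by positivity)]
        rw [show (dLdeg J a : ℤ) + (k : ℤ) = ((dLdeg J a + k : ℕ) : ℤ) by push_cast; ring,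
          Int.toNat_natCast]
        refine Polynomial.coeff_eq_zero_of_degree_lt ?_
        refine lt_of_le_of_lt (bPoly_degree_le J a k) ?_
        exact_mod_cast Nat.cast_lt.mpr (Nat.lt_add_of_pos_right (Nat.pos_of_ne_zero hkne))
      simp [hcz]
    · intro h; simp at h
end

section
/- Let F : ℕ → K be a holonomic sequence over a field K of characteristic 0, let L = Σ_{i=0}^J a_i(n)σ^i be a strongly nondegenerated annihilator of F of order J > 0, and write a_0(n) = A_0(n)·Ã_0(n) with A_0, Ã_0 ∈ K[n]. Then for every p(n) ∈ K[n] and every integer I ≥ J there exist a polynomial p̃(n) ∈ K[n] with deg p̃(n) < deg L + (J−1)·deg A_0(n) and rational functions u_0,…,u_{J−1} ∈ K(n) such that p(n)F(n) = (p̃(n)/∏_{j=1}^{I} A_0(n−j))·F(n) + Σ_{i=0}^{J−1} u_i(n+1)F(n+1+i) − Σ_{i=0}^{J−1} u_i(n)F(n+i) for all n at which all rational functions involved are defined. -/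
open Polynomial Finset

namespace RRH

variable {K : Type*} [Field K]

lemma eval_comp_shift (P : K[X]) (c t : K) : (P.comp (X - C c)).eval t = P.eval (t - c) := by
  simp [eval_comp]

lemma natDegree_comp_shift (P : K[X]) (c : K) : (P.comp (X - C c)).natDegree = P.natDegree := by
  rw [natDegree_comp, natDegree_X_sub_C, mul_one]

lemma ndpow (c : K) (k : ℕ) : ((X - C c) ^ k).natDegree = k := by
  rw [natDegree_pow, natDegree_X_sub_C, mul_one]

lemma coeff_comp_shift (P : K[X]) (c : K) {m : ℕ} (h : P.natDegree ≤ m) :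
    (P.comp (X - C c)).coeff m = P.coeff m := by
  rw [comp_eq_sum_left, Polynomial.sum, finset_sum_coeff]
  rw [Finset.sum_eq_single m]
  · by_cases hm : m ∈ P.support
    · have hmonic : ((X - C c) ^ m).Monic := (monic_X_sub_C c).pow m
      have : ((X - C c) ^ m).coeff m = 1 := by
        have := hmonic.coeff_natDegree
        rwa [ndpow] at this
      rw [coeff_C_mul, this, mul_one]
    · simp only [mem_support_iff, not_not] at hm
      simp [hm]
  · intro k hk hkm
    have hk' : k ≤ P.natDegree := le_natDegree_of_mem_supp k hk
    have hz : ((X - C c) ^ k).coeff m = 0 := by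
      apply coeff_eq_zero_of_natDegree_lt
      rw [ndpow]
      exact lt_of_le_of_ne (hk'.trans h) hkm
    rw [coeff_C_mul, hz, mul_zero]
  · intro hm
    simp only [mem_support_iff, not_not] at hm
    simp [hm]

lemma comp_shift_ne_zero {P : K[X]} (hP : P ≠ 0) (c : K) : P.comp (X - C c) ≠ 0 := by
  intro h
  have := coeff_comp_shift P c (le_refl P.natDegree)
  rw [h, coeff_zero] at this
  exact hP (leadingCoeff_eq_zero.mp this.symm)

lemma coeff_mul_top {P Q : K[X]} {p q : ℕ} (hP : P.natDegree ≤ p) (hQ : Q.natDegree ≤ q) :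
    (P * Q).coeff (p + q) = P.coeff p * Q.coeff q := by
  rcases lt_or_eq_of_le hP with hP' | hP'
  · rw [coeff_eq_zero_of_natDegree_lt hP', zero_mul, coeff_eq_zero_of_natDegree_lt]
    calc (P * Q).natDegree ≤ P.natDegree + Q.natDegree := natDegree_mul_le
      _ < p + q := by omega
  rcases lt_or_eq_of_le hQ with hQ' | hQ'
  · rw [coeff_eq_zero_of_natDegree_lt hQ', mul_zero, coeff_eq_zero_of_natDegree_lt]
    calc (P * Q).natDegree ≤ P.natDegree + Q.natDegree := natDegree_mul_le
      _ < p + q := by omega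
  subst hP' hQ'
  exact coeff_mul_degree_add_degree P Q

lemma coeff_prod_top {ι : Type*} (S : Finset ι) (f : ι → K[X]) (m : ℕ)
    (h : ∀ i ∈ S, (f i).natDegree ≤ m) :
    (∏ i ∈ S, f i).natDegree ≤ S.card * m ∧
      (∏ i ∈ S, f i).coeff (S.card * m) = ∏ i ∈ S, (f i).coeff m := by
  classical
  induction S using Finset.induction_on with
  | empty => simp
  | @insert x s hx ih =>
    have hs := ih (fun i hi => h i (mem_insert_of_mem hi))
    rw [prod_insert hx, prod_insert hx, card_insert_of_notMem hx]
    constructor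
    · calc ((f x) * ∏ i ∈ s, f i).natDegree ≤ (f x).natDegree + (∏ i ∈ s, f i).natDegree :=
        natDegree_mul_le
      _ ≤ m + s.card * m := add_le_add (h x (mem_insert_self x s)) hs.1
      _ = (s.card + 1) * m := by ring
    · have : (s.card + 1) * m = m + s.card * m := by ring
      rw [this, coeff_mul_top (h x (mem_insert_self x s)) hs.1, hs.2]

lemma prod_Icc_shift {M : Type*} [CommMonoid M] (f : ℕ → M) (m L : ℕ) :
    ∏ t ∈ Icc m (m + L), f t = ∏ j ∈ range (L + 1), f (m + j) := by
  rw [← Finset.Ico_add_one_right_eq_Icc, Finset.prod_Ico_eq_prod_range]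
  have : m + L + 1 - m = L + 1 := by omega
  rw [this]

lemma range_succ_insert (n : ℕ) : range (n + 1) = insert 0 (Icc 1 n) := by
  ext x; simp only [mem_range, mem_insert, mem_Icc]; omega


lemma reduce (G : K[X] → K[X]) (hadd : ∀ y z, G (y + z) = G y + G z)
    (N₀ : ℕ) (κ : K) (hκ : κ ≠ 0)
    (hdeg : ∀ y s, y.natDegree ≤ s → (G y).natDegree ≤ N₀ + s ∧ (G y).coeff (N₀ + s) = κ * y.coeff s) :
    ∀ T : K[X], ∃ y : K[X], (T - G y).degree < (N₀ : WithBot ℕ) := by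
  have hG0 : G 0 = 0 := by
    have := hadd 0 0
    rw [add_zero] at this
    exact (left_eq_add.mp this)
  suffices h : ∀ M (T : K[X]), T.natDegree ≤ M → ∃ y : K[X], (T - G y).degree < (N₀ : WithBot ℕ) by
    exact fun T => h T.natDegree T le_rfl
  intro M
  induction M using Nat.strong_induction_on with
  | _ M ih =>
  intro T hTM
  by_cases hT : T.degree < (N₀ : WithBot ℕ)
  · exact ⟨0, by rwa [hG0, sub_zero]⟩
  · have hTne : T ≠ 0 := by
      intro h
      exact hT (h ▸ (by rw [degree_zero]; exact WithBot.bot_lt_coe _ : (0 : K[X]).degree < (N₀ : WithBot ℕ)))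
    have hN₀ : N₀ ≤ T.natDegree := by
      by_contra hc
      exact hT ((natDegree_lt_iff_degree_lt hTne).mp (by omega))
    set m := T.natDegree with hm
    set s := m - N₀ with hs
    have hms : N₀ + s = m := by omega
    set y₁ : K[X] := C (T.coeff m / κ) * X ^ s with hy₁
    have hy₁d : y₁.natDegree ≤ s := by
      calc y₁.natDegree ≤ (C (T.coeff m / κ)).natDegree + (X ^ s : K[X]).natDegree :=
        natDegree_mul_le
      _ ≤ s := by simp
    have hy₁c : y₁.coeff s = T.coeff m / κ := by simp [hy₁, coeff_C_mul, coeff_X_pow]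
    obtain ⟨hd1, hc1⟩ := hdeg y₁ s hy₁d
    set T' := T - G y₁ with hT'
    have hT'c : T'.coeff m = 0 := by
      rw [hT', coeff_sub, ← hms, hc1, hy₁c, mul_div_cancel₀ _ hκ, hms, sub_self]
    have hT'd : T'.natDegree ≤ m := by
      calc T'.natDegree ≤ max T.natDegree (G y₁).natDegree := natDegree_sub_le _ _
        _ ≤ m := by rw [← hm]; exact max_le le_rfl (hms ▸ hd1)
    by_cases hT'0 : T' = 0
    · exact ⟨y₁, by rw [← hT', hT'0, degree_zero]; exact WithBot.bot_lt_coe _⟩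
    · have hT'lt : T'.natDegree < m := by
        rcases lt_or_eq_of_le hT'd with h | h
        · exact h
        · exfalso
          have hne : T'.coeff T'.natDegree ≠ 0 := coeff_ne_zero_of_eq_degree (degree_eq_natDegree hT'0)
          rw [h] at hne
          exact hne hT'c
      obtain ⟨y₂, hy₂⟩ := ih T'.natDegree (lt_of_lt_of_le hT'lt (hm ▸ hTM)) T' le_rfl
      refine ⟨y₁ + y₂, ?_⟩
      rwa [hadd, ← sub_sub, ← hT']


end RRH

namespace RRH
open Polynomial Finset
variable {K : Type*} [Field K]

lemma bPoly_degree_le (J : ℕ) (a : ℕ → K[X]) (k : ℕ) :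
    (bPoly J a k).degree ≤ ((dLdeg J a : ℕ) : WithBot ℕ) := by
  apply Polynomial.degree_sum_le _ _ |>.trans
  apply Finset.sup_le
  intro j hj
  refine (degree_smul_le _ _).trans ?_
  refine (degree_le_natDegree).trans ?_
  rw [Nat.cast_le]
  have : X + C ((j : K) - (J : K)) = X - C ((J : K) - (j : K)) := by
    rw [map_sub, map_sub]; ring
  rw [this, natDegree_comp_shift]
  exact Finset.le_sup (f := fun i => (a i).natDegree)
    (Finset.mem_range.mpr (Nat.lt_succ_of_le (Nat.sub_le J j)))

lemma strong_c_ne_zero (J : ℕ) (a : ℕ → K[X])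
    (hstrong : opDegree J a = ((dLdeg J a : ℤ) : WithBot ℤ)) :
    (∑ i ∈ Finset.range (J + 1), (a i).coeff (dLdeg J a)) ≠ 0 := by
  set d := dLdeg J a with hd
  obtain ⟨k, hk, heq⟩ := Finset.exists_mem_eq_sup (Finset.range (J + 1)) ⟨0, by simp⟩
    (fun k => WithBot.map (fun m : ℕ => (m : ℤ) - (k : ℤ)) (bPoly J a k).degree)
  rw [← opDegree, hstrong] at heq
  have hb0 : (bPoly J a 0).degree = (d : WithBot ℕ) := by
    cases hdeg : (bPoly J a k).degree with
    | bot => rw [hdeg] at heq; simp at heq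
    | coe m =>
      rw [hdeg, WithBot.map_coe] at heq
      have hmk : (d : ℤ) = (m : ℤ) - (k : ℤ) := by exact_mod_cast heq
      have hmd : m ≤ d := by
        have := bPoly_degree_le J a k
        rw [hdeg, ← hd] at this
        rw [show (WithBot.some m : WithBot ℕ) = ((m : ℕ) : WithBot ℕ) from rfl] at this
        exact_mod_cast this
      have hk0 : k = 0 ∧ m = d := by omega
      rw [← hk0.1, hdeg, hk0.2]
      try rfl
      try exact_mod_cast rfl
  have hcoeff : (bPoly J a 0).coeff d ≠ 0 := coeff_ne_zero_of_eq_degree hb0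
  have hval : (bPoly J a 0).coeff d = ∑ i ∈ Finset.range (J + 1), (a i).coeff d := by
    rw [bPoly, finset_sum_coeff]
    have h1 : ∀ j ∈ Finset.Icc 0 J,
        (((j.choose 0 : K)) • (a (J - j)).comp (X + C ((j : K) - (J : K)))).coeff d
          = (a (J - j)).coeff d := by
      intro j hj
      rw [coeff_smul, Nat.choose_zero_right, Nat.cast_one, one_smul]
      have : X + C ((j : K) - (J : K)) = X - C ((J : K) - (j : K)) := by
        rw [map_sub, map_sub]; ring
      rw [this, coeff_comp_shift]
      exact Finset.le_sup (f := fun i => (a i).natDegree)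
        (Finset.mem_range.mpr (Nat.lt_succ_of_le (Nat.sub_le J j)))
    rw [Finset.sum_congr rfl h1]
    have h2 : Finset.Icc 0 J = Finset.range (J + 1) := by
      ext x; simp [Finset.mem_Icc, Finset.mem_range]
    rw [h2]
    have := Finset.sum_range_reflect (fun i => (a i).coeff d) (J + 1)
    simpa using this
  rw [← hval]
  exact hcoeff

end RRH

/-- Let `L = ∑_{i=0}^J a_i(n) σ^i` be a strongly nondegenerated annihilator
of the holonomic sequence `F` of order `J > 0`, and write `a_0(n) = A₀(n)·Acot₀(n)`.
Then for every polynomial `p` and every `I ≥ J` there exist a polynomial `p̃` with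
`deg p̃ < deg L + (J-1)·deg A₀` and rational functions `u_i = u i / v i`, `0 ≤ i ≤ J-1`,
such that `p(n)F(n) = (p̃(n)/∏_{j=1}^I A₀(n-j))·F(n)
+ ∑_i u_i(n+1)F(n+1+i) - ∑_i u_i(n)F(n+i)` wherever everything is defined. -/
theorem rational_reduction_head {K : Type*} [Field K] [CharZero K]
    (F : ℕ → K) (hF : Holonomic F) (J : ℕ) (hJ : 0 < J) (a : ℕ → K[X]) (haJ : a J ≠ 0)
    (hann : Annihilates J a F)
    (hstrong : opDegree J a = ((dLdeg J a : ℤ) : WithBot ℤ))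
    (A₀ Acot₀ : K[X]) (hfact : a 0 = A₀ * Acot₀)
    (p : K[X]) (I : ℕ) (hI : J ≤ I) :
    ∃ ptilde : K[X],
      WithBot.map (fun d : ℕ => (d : ℤ)) ptilde.degree <
        opDegree J a + ((((J - 1) * A₀.natDegree : ℕ) : ℤ) : WithBot ℤ) ∧
      ∃ u v : ℕ → K[X], (∀ i < J, v i ≠ 0) ∧ ∀ n : ℕ,
        (∏ j ∈ Finset.Icc 1 I, A₀.eval ((n : K) - (j : K))) ≠ 0 →
        (∀ i < J, (v i).eval (n : K) ≠ 0 ∧ (v i).eval ((n : K) + 1) ≠ 0) →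
        p.eval (n : K) * F n =
          ptilde.eval (n : K) / (∏ j ∈ Finset.Icc 1 I, A₀.eval ((n : K) - (j : K))) * F n +
            ((∑ i ∈ Finset.range J,
                (u i).eval ((n : K) + 1) / (v i).eval ((n : K) + 1) * F (n + 1 + i)) -
              ∑ i ∈ Finset.range J, (u i).eval (n : K) / (v i).eval (n : K) * F (n + i)) := by
  classical
  by_cases hA₀ : A₀ = 0
  · refine ⟨0, ?_, (fun _ => 0), (fun _ => 1), fun i _ => one_ne_zero, ?_⟩
    · rw [hstrong, degree_zero, ← WithBot.coe_add]
      exact WithBot.bot_lt_coe _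
    · intro n hDn hvn
      exfalso
      apply hDn
      refine Finset.prod_eq_zero (Finset.mem_Icc.mpr ⟨le_refl 1, by omega⟩) ?_
      simp [hA₀]
  -- main case
  have hJ1 : J - 1 + 1 = J := by omega
  set d := dLdeg J a with hd
  set α := A₀.natDegree with hα
  set A := A₀.leadingCoeff with hA
  have hAne : A ≠ 0 := leadingCoeff_ne_zero.mpr hA₀
  have hc : (∑ i ∈ Finset.range (J + 1), (a i).coeff d) ≠ 0 := RRH.strong_c_ne_zero J a hstrong
  set c := ∑ i ∈ Finset.range (J + 1), (a i).coeff d with hcdef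
  have hai : ∀ i, i ≤ J → (a i).natDegree ≤ d := by
    intro i hi
    exact Finset.le_sup (f := fun i => (a i).natDegree) (Finset.mem_range.mpr (by omega))
  set N₀ := d + (J - 1) * α with hN₀
  set κ := A ^ (J - 1) * c with hκdef
  have hκ : κ ≠ 0 := mul_ne_zero (pow_ne_zero _ hAne) hc
  have hJα : J * α = (J - 1) * α + α := by
    nth_rewrite 1 [← hJ1]; ring
  -- the cofactor polynomials
  set P0 : K[X] := ∏ t ∈ Finset.Icc (I - J + 1) I, A₀.comp (X - C (t : K)) with hP0def
  set Pc : ℕ → K[X] :=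
    fun i => ∏ t ∈ Finset.Icc 1 I \ Finset.Icc i (i + (I - J)), A₀.comp (X - C (t : K)) with hPcdef
  set Gf : K[X] → K[X] := fun z =>
    Acot₀ * z * P0 + ∑ i ∈ Finset.Icc 1 J, ((a i * z).comp (X - C (i : K))) * Pc i with hGfdef
  have hGadd : ∀ z w : K[X], Gf (z + w) = Gf z + Gf w := by
    intro z w
    simp only [hGfdef, mul_add, add_comp, add_mul, Finset.sum_add_distrib]
    ring
  -- cofactor facts
  have hP0c : P0.natDegree ≤ J * α ∧ P0.coeff (J * α) = A ^ J := by
    have hcard : (Finset.Icc (I - J + 1) I).card = J := by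
      rw [Nat.card_Icc]; omega
    have := RRH.coeff_prod_top (Finset.Icc (I - J + 1) I)
      (fun t => A₀.comp (X - C (t : K))) α
      (fun t _ => le_of_eq (RRH.natDegree_comp_shift A₀ _))
    rw [hcard] at this
    refine ⟨this.1, ?_⟩
    rw [this.2]
    rw [Finset.prod_congr rfl (fun t _ => RRH.coeff_comp_shift A₀ _ (le_refl _))]
    rw [Finset.prod_const, hcard]
    rfl
  have hPcc : ∀ i ∈ Finset.Icc 1 J,
      (Pc i).natDegree ≤ (J - 1) * α ∧ (Pc i).coeff ((J - 1) * α) = A ^ (J - 1) := by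
    intro i hi
    rw [Finset.mem_Icc] at hi
    have hsub : Finset.Icc i (i + (I - J)) ⊆ Finset.Icc 1 I := by
      intro t ht
      rw [Finset.mem_Icc] at *
      omega
    have hcard : (Finset.Icc 1 I \ Finset.Icc i (i + (I - J))).card = J - 1 := by
      rw [Finset.card_sdiff_of_subset hsub, Nat.card_Icc, Nat.card_Icc]; omega
    have := RRH.coeff_prod_top (Finset.Icc 1 I \ Finset.Icc i (i + (I - J)))
      (fun t => A₀.comp (X - C (t : K))) α
      (fun t _ => le_of_eq (RRH.natDegree_comp_shift A₀ _))
    rw [hcard] at this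
    refine ⟨this.1, ?_⟩
    rw [this.2]
    rw [Finset.prod_congr rfl (fun t _ => RRH.coeff_comp_shift A₀ _ (le_refl _))]
    rw [Finset.prod_const, hcard]
    rfl
  -- term coefficient computations
  have hterm0 : ∀ z : K[X], ∀ s : ℕ, z.natDegree ≤ s →
      (Acot₀ * z * P0).natDegree ≤ N₀ + s ∧
        (Acot₀ * z * P0).coeff (N₀ + s) = A ^ (J - 1) * (a 0).coeff d * z.coeff s := by
    intro z s hzs
    by_cases hAc : Acot₀ = 0
    · have ha0 : a 0 = 0 := by rw [hfact, hAc, mul_zero]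
      simp [hAc, ha0]
    · have hnd0 : (a 0).natDegree = α + Acot₀.natDegree := by
        rw [hfact, natDegree_mul hA₀ hAc]
      set β := Acot₀.natDegree with hβ
      have hab : α + β ≤ d := hnd0 ▸ hai 0 (by omega)
      have hup : (Acot₀ * z).natDegree ≤ β + s :=
        natDegree_mul_le.trans (add_le_add le_rfl hzs)
      have hndP : (Acot₀ * z * P0).natDegree ≤ β + s + J * α :=
        natDegree_mul_le.trans (add_le_add hup hP0c.1)
      rcases lt_or_eq_of_le hab with hlt | heq
      · have hss : β + s + J * α < N₀ + s := by
          obtain ⟨γ, hγ⟩ : ∃ γ, (J - 1) * α = γ := ⟨_, rfl⟩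
          rw [hN₀, hJα, hγ]
          omega
        refine ⟨hndP.trans hss.le, ?_⟩
        have ha0z : (a 0).coeff d = 0 :=
          coeff_eq_zero_of_natDegree_lt (by rw [hnd0]; exact hlt)
        rw [coeff_eq_zero_of_natDegree_lt (hndP.trans_lt hss), ha0z]
        ring
      · have hsplit : N₀ + s = (β + s) + J * α := by
          obtain ⟨γ, hγ⟩ : ∃ γ, (J - 1) * α = γ := ⟨_, rfl⟩
          rw [hN₀, hJα, hγ]
          omega
        have hA₀α : A₀.coeff α = A := by rw [hA, hα]; rfl
        have ha0c : (a 0).coeff d = A * Acot₀.coeff β := by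
          rw [hfact, ← heq, RRH.coeff_mul_top (le_refl α) (le_refl β), hA₀α]
        have hpow : A ^ J = A ^ (J - 1) * A := by
          nth_rewrite 1 [← hJ1]; rw [pow_succ]
        refine ⟨hsplit ▸ hndP, ?_⟩
        rw [hsplit, RRH.coeff_mul_top hup hP0c.1, RRH.coeff_mul_top le_rfl hzs, hP0c.2,
          ha0c, hpow]
        ring
  have htermi : ∀ i ∈ Finset.Icc 1 J, ∀ z : K[X], ∀ s : ℕ, z.natDegree ≤ s →
      (((a i * z).comp (X - C (i : K))) * Pc i).natDegree ≤ N₀ + s ∧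
        (((a i * z).comp (X - C (i : K))) * Pc i).coeff (N₀ + s)
          = A ^ (J - 1) * (a i).coeff d * z.coeff s := by
    intro i hi z s hzs
    have hii := Finset.mem_Icc.mp hi
    have haiz : (a i * z).natDegree ≤ d + s :=
      natDegree_mul_le.trans (add_le_add (hai i hii.2) hzs)
    have hnd1 : ((a i * z).comp (X - C (i : K))).natDegree ≤ d + s := by
      rw [RRH.natDegree_comp_shift]; exact haiz
    have hPc := hPcc i hi
    have hsum : N₀ + s = (d + s) + (J - 1) * α := by rw [hN₀]; ring
    constructor
    · calc (((a i * z).comp (X - C (i : K))) * Pc i).natDegree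
          ≤ ((a i * z).comp (X - C (i : K))).natDegree + (Pc i).natDegree := natDegree_mul_le
        _ ≤ (d + s) + (J - 1) * α := add_le_add hnd1 hPc.1
        _ = N₀ + s := hsum.symm
    · rw [hsum, RRH.coeff_mul_top hnd1 hPc.1, RRH.coeff_comp_shift _ _ haiz,
        RRH.coeff_mul_top (hai i hii.2) hzs, hPc.2]
      ring
  have hGdeg : ∀ z : K[X], ∀ s : ℕ, z.natDegree ≤ s →
      (Gf z).natDegree ≤ N₀ + s ∧ (Gf z).coeff (N₀ + s) = κ * z.coeff s := by
    intro z s hzs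
    have h0 := hterm0 z s hzs
    have hit := fun i hi => htermi i hi z s hzs
    constructor
    · simp only [hGfdef]
      refine (natDegree_add_le _ _).trans (max_le h0.1 ?_)
      exact Polynomial.natDegree_sum_le_of_forall_le _ _ (fun i hmem => (hit i hmem).1)
    · simp only [hGfdef]
      rw [coeff_add, finset_sum_coeff, h0.2,
        Finset.sum_congr rfl (fun i hmem => (hit i hmem).2)]
      rw [hκdef, hcdef, RRH.range_succ_insert J, Finset.sum_insert (by simp)]
      rw [mul_add, add_mul, Finset.mul_sum, Finset.sum_mul]
      try congr 1
      all_goals try ring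
      all_goals exact Finset.sum_congr rfl fun i _ => by ring
  -- the reduction
  set Dp : K[X] := ∏ j ∈ Finset.Icc 1 I, A₀.comp (X - C (j : K)) with hDpdef
  obtain ⟨y, hy⟩ := RRH.reduce Gf hGadd N₀ κ hκ hGdeg (p * Dp)
  refine ⟨p * Dp - Gf y, ?_, ?_⟩
  · -- degree bound
    rw [hstrong]
    have hcoeadd : ((dLdeg J a : ℤ) : WithBot ℤ) + ((((J - 1) * A₀.natDegree : ℕ) : ℤ) : WithBot ℤ)
        = ((N₀ : ℤ) : WithBot ℤ) := by
      rw [← WithBot.coe_add]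
      congr 1
      all_goals (push_cast [hN₀]; try ring)
    rw [hcoeadd]
    rcases eq_or_ne (p * Dp - Gf y) 0 with h0 | h0
    · rw [h0, degree_zero]
      exact WithBot.bot_lt_coe _
    · rw [degree_eq_natDegree h0] at hy ⊢
      have hlt : (p * Dp - Gf y).natDegree < N₀ := by exact_mod_cast hy
      have hmap : WithBot.map (fun d : ℕ => (d : ℤ))
          (((p * Dp - Gf y).natDegree : ℕ) : WithBot ℕ)
          = (((p * Dp - Gf y).natDegree : ℤ) : WithBot ℤ) := rfl
      rw [hmap]
      exact_mod_cast hlt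
  · -- the rational certificate
    set Vp : K[X] := ∏ t ∈ Finset.range (I + 1), A₀.comp (X - C (t : K)) with hVpdef
    set cof : ℕ → ℕ → K[X] := fun i k =>
      ∏ t ∈ Finset.range (I + 1) \ Finset.Icc (k - i) (k - i + (I - J)),
        A₀.comp (X - C (t : K)) with hcofdef
    set u : ℕ → K[X] := fun i =>
      -∑ k ∈ Finset.Icc (i + 1) J,
        ((a k * y).comp (X - C ((k : K) - (i : K)))) * cof i k with hudef
    refine ⟨u, fun _ => Vp, fun i _ => ?_, ?_⟩
    · exact Finset.prod_ne_zero_iff.mpr fun t _ => RRH.comp_shift_ne_zero hA₀ _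
    intro n hDn hvn
    set ν : K := (n : K) with hν
    have hVeval : ∀ b : K, Vp.eval b = ∏ t ∈ Finset.range (I + 1), A₀.eval (b - t) := by
      intro b
      rw [hVpdef, eval_prod]
      exact Finset.prod_congr rfl fun t _ => RRH.eval_comp_shift _ _ _
    have hv1 : Vp.eval ν ≠ 0 := (hvn 0 hJ).1
    have hv2 : Vp.eval (ν + 1) ≠ 0 := (hvn 0 hJ).2
    have hgb : ∀ t ∈ Finset.range (I + 1), A₀.eval (ν - t) ≠ 0 := by
      rw [hVeval] at hv1
      exact Finset.prod_ne_zero_iff.mp hv1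
    have hgb' : ∀ t ∈ Finset.range (I + 1), A₀.eval (ν + 1 - t) ≠ 0 := by
      rw [hVeval] at hv2
      exact Finset.prod_ne_zero_iff.mp hv2
    set xv : K → K := fun b =>
      y.eval b / ∏ j ∈ Finset.range (I - J + 1), A₀.eval (b - j) with hxvdef
    set W : K → ℕ → K := fun b i =>
      ∑ k ∈ Finset.Icc (i + 1) J, (a k).eval (b + i - k) * xv (b + i - k) with hWdef
    -- value of u i / Vp
    have hU : ∀ b : K, (∀ t ∈ Finset.range (I + 1), A₀.eval (b - t) ≠ 0) → ∀ i, i < J →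
        (u i).eval b / Vp.eval b = -(W b i) := by
      intro b hb i hiJ
      have hVb : Vp.eval b = ∏ t ∈ Finset.range (I + 1), A₀.eval (b - t) := hVeval b
      simp only [hudef, hWdef, eval_neg, eval_finset_sum, eval_mul]
      rw [neg_div, Finset.sum_div, neg_inj]
      apply Finset.sum_congr rfl
      intro k hk
      have hik := Finset.mem_Icc.mp hk
      have hsubk : Finset.Icc (k - i) (k - i + (I - J)) ⊆ Finset.range (I + 1) := by
        intro t ht
        rw [Finset.mem_Icc] at ht
        rw [Finset.mem_range]
        omega
      have hsplit : (∏ t ∈ Finset.range (I + 1) \ Finset.Icc (k - i) (k - i + (I - J)),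
            A₀.eval (b - t)) * ∏ t ∈ Finset.Icc (k - i) (k - i + (I - J)), A₀.eval (b - t)
          = ∏ t ∈ Finset.range (I + 1), A₀.eval (b - t) := Finset.prod_sdiff hsubk
      have hcofe : (cof i k).eval b
          = ∏ t ∈ Finset.range (I + 1) \ Finset.Icc (k - i) (k - i + (I - J)),
              A₀.eval (b - t) := by
        simp only [hcofdef]
        rw [eval_prod]
        exact Finset.prod_congr rfl fun t _ => RRH.eval_comp_shift _ _ _
      have hdenval : (∏ t ∈ Finset.Icc (k - i) (k - i + (I - J)), A₀.eval (b - t))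
          = ∏ j ∈ Finset.range (I - J + 1), A₀.eval (b + i - k - j) := by
        rw [RRH.prod_Icc_shift (fun t => A₀.eval (b - (t : K))) (k - i) (I - J)]
        apply Finset.prod_congr rfl
        intro j _
        congr 1
        have hki : ((k - i : ℕ) : K) = (k : K) - (i : K) := by
          push_cast [Nat.cast_sub (by omega : i ≤ k)]
          ring
        push_cast [hki]
        ring
      have hcofne : (∏ t ∈ Finset.range (I + 1) \ Finset.Icc (k - i) (k - i + (I - J)),
          A₀.eval (b - t)) ≠ 0 :=
        Finset.prod_ne_zero_iff.mpr fun t ht => hb t (Finset.mem_sdiff.mp ht).1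
      have hdenne : (∏ t ∈ Finset.Icc (k - i) (k - i + (I - J)), A₀.eval (b - t)) ≠ 0 :=
        Finset.prod_ne_zero_iff.mpr fun t ht => hb t (hsubk ht)
      have hce : ((a k * y).comp (X - C ((k : K) - (i : K)))).eval b
          = (a k).eval (b + i - k) * y.eval (b + i - k) := by
        rw [RRH.eval_comp_shift, eval_mul]
        congr 2 <;> ring
      rw [hce, hcofe, hVb, ← hsplit, hxvdef]
      simp only []
      rw [← hdenval]
      field_simp
    -- value of (Gf y) / Dp
    have hDval : Dp.eval ν = ∏ j ∈ Finset.Icc 1 I, A₀.eval (ν - j) := by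
      rw [hDpdef, eval_prod]
      exact Finset.prod_congr rfl fun t _ => RRH.eval_comp_shift _ _ _
    have hGv : (Gf y).eval ν / (∏ j ∈ Finset.Icc 1 I, A₀.eval (ν - j))
        = ∑ i ∈ Finset.range (J + 1), (a i).eval (ν - i) * xv (ν - i) := by
      simp only [hGfdef, eval_add, eval_finset_sum, eval_mul]
      rw [add_div, Finset.sum_div, RRH.range_succ_insert J, Finset.sum_insert (by simp)]
      congr 1
      · -- term 0
        have hsub0 : Finset.Icc (I - J + 1) I ⊆ Finset.Icc 1 I := by
          intro t ht
          rw [Finset.mem_Icc] at *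
          omega
        have hsplit0 : (∏ t ∈ Finset.Icc 1 I \ Finset.Icc (I - J + 1) I, A₀.eval (ν - t))
            * ∏ t ∈ Finset.Icc (I - J + 1) I, A₀.eval (ν - t)
            = ∏ t ∈ Finset.Icc 1 I, A₀.eval (ν - t) := Finset.prod_sdiff hsub0
        have hsd : Finset.Icc 1 I \ Finset.Icc (I - J + 1) I = Finset.Icc 1 (I - J) := by
          ext t
          simp only [Finset.mem_sdiff, Finset.mem_Icc, not_and, not_le]
          omega
        have hP0e : P0.eval ν = ∏ t ∈ Finset.Icc (I - J + 1) I, A₀.eval (ν - t) := by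
          rw [hP0def, eval_prod]
          exact Finset.prod_congr rfl fun t _ => RRH.eval_comp_shift _ _ _
        have hden0 : (∏ j ∈ Finset.range (I - J + 1), A₀.eval (ν - j))
            = A₀.eval ν * ∏ t ∈ Finset.Icc 1 (I - J), A₀.eval (ν - t) := by
          rw [RRH.range_succ_insert (I - J), Finset.prod_insert (by simp)]
          simp only [Nat.cast_zero, sub_zero]
        have ha0e : (a 0).eval ν = A₀.eval ν * Acot₀.eval ν := by rw [hfact, eval_mul]
        have hA0ne : A₀.eval ν ≠ 0 := by
          have := hgb 0 (Finset.mem_range.mpr (by omega))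
          simpa using this
        have hQne : (∏ t ∈ Finset.Icc 1 (I - J), A₀.eval (ν - t)) ≠ 0 := by
          apply Finset.prod_ne_zero_iff.mpr
          intro t ht
          rw [Finset.mem_Icc] at ht
          exact hgb t (Finset.mem_range.mpr (by omega))
        have hP0ne : (∏ t ∈ Finset.Icc (I - J + 1) I, A₀.eval (ν - t)) ≠ 0 := by
          apply Finset.prod_ne_zero_iff.mpr
          intro t ht
          rw [Finset.mem_Icc] at ht
          exact hgb t (Finset.mem_range.mpr (by omega))
        rw [hP0e, ← hsplit0, hsd, hxvdef]
        simp only [Nat.cast_zero, sub_zero]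
        rw [hden0, ha0e]
        field_simp
      · -- terms 1..J
        apply Finset.sum_congr rfl
        intro i hi
        have hii := Finset.mem_Icc.mp hi
        have hsub : Finset.Icc i (i + (I - J)) ⊆ Finset.Icc 1 I := by
          intro t ht
          rw [Finset.mem_Icc] at *
          omega
        have hsplit : (∏ t ∈ Finset.Icc 1 I \ Finset.Icc i (i + (I - J)), A₀.eval (ν - t))
            * ∏ t ∈ Finset.Icc i (i + (I - J)), A₀.eval (ν - t)
            = ∏ t ∈ Finset.Icc 1 I, A₀.eval (ν - t) := Finset.prod_sdiff hsub
        have hPce : (Pc i).eval ν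
            = ∏ t ∈ Finset.Icc 1 I \ Finset.Icc i (i + (I - J)), A₀.eval (ν - t) := by
          simp only [hPcdef]
          rw [eval_prod]
          exact Finset.prod_congr rfl fun t _ => RRH.eval_comp_shift _ _ _
        have hdenval : (∏ t ∈ Finset.Icc i (i + (I - J)), A₀.eval (ν - t))
            = ∏ j ∈ Finset.range (I - J + 1), A₀.eval (ν - i - j) := by
          rw [RRH.prod_Icc_shift (fun t => A₀.eval (ν - (t : K))) i (I - J)]
          apply Finset.prod_congr rfl
          intro j _
          congr 1
          push_cast
          ring
        have hcofne : (∏ t ∈ Finset.Icc 1 I \ Finset.Icc i (i + (I - J)),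
            A₀.eval (ν - t)) ≠ 0 := by
          apply Finset.prod_ne_zero_iff.mpr
          intro t ht
          have := (Finset.mem_sdiff.mp ht).1
          rw [Finset.mem_Icc] at this
          exact hgb t (Finset.mem_range.mpr (by omega))
        have hdenne : (∏ t ∈ Finset.Icc i (i + (I - J)), A₀.eval (ν - t)) ≠ 0 := by
          apply Finset.prod_ne_zero_iff.mpr
          intro t ht
          have := hsub ht
          rw [Finset.mem_Icc] at this
          exact hgb t (Finset.mem_range.mpr (by omega))
        have hce : ((a i * y).comp (X - C (i : K))).eval ν
            = (a i).eval (ν - i) * y.eval (ν - i) := by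
          rw [RRH.eval_comp_shift, eval_mul]
        rw [hce, hPce, ← hsplit, hxvdef]
        simp only []
        rw [← hdenval]
        field_simp
    -- telescoping
    set S : ℕ → K := fun i =>
      ∑ k ∈ Finset.Icc i J, (a k).eval (ν + i - k) * xv (ν + i - k) with hSdef
    have hWS : ∀ i, i < J → W ν i = S i - (a i).eval ν * xv ν := by
      intro i hiJ
      have hins : Finset.Icc i J = insert i (Finset.Icc (i + 1) J) := by
        ext t
        simp only [Finset.mem_Icc, Finset.mem_insert]
        omega
      simp only [hWdef, hSdef]
      rw [hins, Finset.sum_insert (by simp)]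
      rw [show ν + (i : K) - (i : K) = ν by ring]
      ring
    have hWS' : ∀ i, i < J → W (ν + 1) i = S (i + 1) := by
      intro i hiJ
      simp only [hWdef, hSdef]
      apply Finset.sum_congr rfl
      intro k hk
      rw [show ν + 1 + (i : K) - (k : K) = ν + ((i + 1 : ℕ) : K) - (k : K) by push_cast; ring]
    have hS0 : S 0 = ∑ i ∈ Finset.range (J + 1), (a i).eval (ν - i) * xv (ν - i) := by
      simp only [hSdef]
      rw [show Finset.Icc 0 J = Finset.range (J + 1) by
        ext t; simp only [Finset.mem_Icc, Finset.mem_range]; omega]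
      apply Finset.sum_congr rfl
      intro k _
      rw [show ν + ((0 : ℕ) : K) - (k : K) = ν - (k : K) by push_cast; ring]
    have hSJ : S J = (a J).eval ν * xv ν := by
      simp only [hSdef]
      rw [Finset.Icc_self, Finset.sum_singleton,
        show ν + (J : K) - (J : K) = ν by ring]
    have hrec : ∑ i ∈ Finset.range (J + 1), (a i).eval ν * F (n + i) = 0 := by
      rw [hν]
      exact hann n
    have htel : (∑ i ∈ Finset.range J, W ν i * F (n + i))
        - ∑ i ∈ Finset.range J, W (ν + 1) i * F (n + 1 + i)
        = (∑ i ∈ Finset.range (J + 1), (a i).eval (ν - i) * xv (ν - i)) * F n := by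
      have h1 : ∑ i ∈ Finset.range J, W ν i * F (n + i)
          = (∑ i ∈ Finset.range J, S i * F (n + i))
            - xv ν * ∑ i ∈ Finset.range J, (a i).eval ν * F (n + i) := by
        rw [Finset.mul_sum, ← Finset.sum_sub_distrib]
        apply Finset.sum_congr rfl
        intro i hi
        rw [hWS i (Finset.mem_range.mp hi)]
        ring
      have h2 : ∑ i ∈ Finset.range J, W (ν + 1) i * F (n + 1 + i)
          = (∑ i ∈ Finset.range (J + 1), S i * F (n + i)) - S 0 * F n := by
        have e1 : ∀ i ∈ Finset.range J, W (ν + 1) i * F (n + 1 + i)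
            = S (i + 1) * F (n + (i + 1)) := by
          intro i hi
          rw [hWS' i (Finset.mem_range.mp hi), show n + 1 + i = n + (i + 1) by omega]
        rw [Finset.sum_congr rfl e1, Finset.sum_range_succ' (fun i => S i * F (n + i)) J]
        simp only [Nat.add_zero]
        ring
      have h3 : ∑ i ∈ Finset.range J, S i * F (n + i)
          = (∑ i ∈ Finset.range (J + 1), S i * F (n + i)) - S J * F (n + J) := by
        rw [Finset.sum_range_succ]
        ring
      have h4 : xv ν * (∑ i ∈ Finset.range J, (a i).eval ν * F (n + i))
          + (a J).eval ν * xv ν * F (n + J) = 0 := by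
        have h5 : ∑ i ∈ Finset.range J, (a i).eval ν * F (n + i)
            = - ((a J).eval ν * F (n + J)) := by
          have := hrec
          rw [Finset.sum_range_succ] at this
          linear_combination this
        rw [h5]
        ring
      rw [h1, h2, h3, hS0, hSJ]
      linear_combination -h4
    -- final assembly
    have hptilde : (p * Dp - Gf y).eval ν / (∏ j ∈ Finset.Icc 1 I, A₀.eval (ν - j))
        = p.eval ν - ∑ i ∈ Finset.range (J + 1), (a i).eval (ν - i) * xv (ν - i) := by
      rw [eval_sub, eval_mul, sub_div, hDval, mul_div_cancel_right₀ _ hDn, ← hDval]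
      rw [show Dp.eval ν = ∏ j ∈ Finset.Icc 1 I, A₀.eval (ν - j) from hDval, hGv]
    have hsum1 : ∑ i ∈ Finset.range J, (u i).eval ν / Vp.eval ν * F (n + i)
        = -∑ i ∈ Finset.range J, W ν i * F (n + i) := by
      rw [← Finset.sum_neg_distrib]
      apply Finset.sum_congr rfl
      intro i hi
      rw [hU ν hgb i (Finset.mem_range.mp hi)]
      ring
    have hsum2 : ∑ i ∈ Finset.range J, (u i).eval (ν + 1) / Vp.eval (ν + 1) * F (n + 1 + i)
        = -∑ i ∈ Finset.range J, W (ν + 1) i * F (n + 1 + i) := by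
      rw [← Finset.sum_neg_distrib]
      apply Finset.sum_congr rfl
      intro i hi
      rw [hU (ν + 1) hgb' i (Finset.mem_range.mp hi)]
      ring
    rw [hptilde, hsum1, hsum2]
    linear_combination -htel
end

section
/- Let L = Σ_{i=0}^J a_i(n)σ^i (a_i ∈ K[n]) annihilate the sequence F : ℕ → K over a field K of characteristic 0. Then for every x(n) ∈ K[n] and every n ∈ ℕ, L*(x)(n)·F(n) = Σ_{i=0}^{J−1} u_i(n)F(n+i) − Σ_{i=0}^{J−1} u_i(n+1)F(n+1+i), where u_i(n) = Σ_{j=1}^{J−i} a_{i+j}(n−j)·x(n−j) ∈ K[n]. In particular L*(x)(n)·F(n) is summable for every polynomial x. -/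
open Polynomial Finset

lemma peel0 {K : Type*} [AddCommMonoid K] (m : ℕ) (f : ℕ → K) :
    ∑ j ∈ Finset.range (m+1), f j = f 0 + ∑ j ∈ Finset.Icc 1 m, f j := by
  rw [Finset.sum_range_succ', ← Finset.Ico_add_one_right_eq_Icc, Finset.sum_Ico_eq_sum_range]
  simp [add_comm]

lemma icc_reindex {K : Type*} [AddCommMonoid K] (m : ℕ) (f : ℕ → K) :
    ∑ j ∈ Finset.Icc 1 m, f j = ∑ j ∈ Finset.range m, f (1 + j) := by
  rw [← Finset.Ico_add_one_right_eq_Icc, Finset.sum_Ico_eq_sum_range]; simp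

lemma key_adjoint {K : Type*} [Field K] [CharZero K]
    (F : ℕ → K) (J : ℕ) (a : ℕ → K[X]) (hann : Annihilates J a F) (x : K[X]) (n : ℕ) :
    (adjointApply J a x).eval (n : K) * F n =
        (∑ i ∈ Finset.range J,
            (∑ j ∈ Finset.Icc 1 (J - i),
              (a (i + j)).eval ((n : K) - (j : K)) * x.eval ((n : K) - (j : K))) * F (n + i)) -
          ∑ i ∈ Finset.range J,
            (∑ j ∈ Finset.Icc 1 (J - i),
              (a (i + j)).eval (((n : K) + 1) - (j : K)) * x.eval (((n : K) + 1) - (j : K))) *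
              F (n + 1 + i) := by
  set G : ℕ → ℕ → K := fun i j =>
    (a (i + j)).eval ((n : K) - (j : K)) * x.eval ((n : K) - (j : K)) * F (n + i) with hG
  have hT1 : (∑ i ∈ Finset.range J,
      (∑ j ∈ Finset.Icc 1 (J - i),
        (a (i + j)).eval ((n : K) - (j : K)) * x.eval ((n : K) - (j : K))) * F (n + i))
      = ∑ i ∈ Finset.range (J+1), ∑ j ∈ Finset.Icc 1 (J - i), G i j := by
    rw [Finset.sum_range_succ]
    simp [Finset.sum_mul, hG]
  have hT2 : (∑ i ∈ Finset.range J,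
      (∑ j ∈ Finset.Icc 1 (J - i),
        (a (i + j)).eval (((n : K) + 1) - (j : K)) * x.eval (((n : K) + 1) - (j : K))) *
        F (n + 1 + i))
      = ∑ i ∈ Finset.range J, ∑ j ∈ Finset.range (J - (i+1) + 1), G (i+1) j := by
    refine Finset.sum_congr rfl fun i hi => ?_
    rw [Finset.sum_mul, icc_reindex]
    have hJi : J - i = J - (i+1) + 1 := by
      have := Finset.mem_range.mp hi; omega
    rw [hJi]
    refine Finset.sum_congr rfl fun j _ => ?_
    have h1 : i + (1 + j) = i + 1 + j := by ring
    have h2 : ((n : K) + 1) - ((1 + j : ℕ) : K) = (n : K) - (j : K) := by push_cast; ring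
    have h3 : n + 1 + i = n + (i + 1) := by ring
    rw [hG, h1, h2, h3]
  have hA : ∑ i ∈ Finset.range (J+1), G i 0 = 0 := by
    have : ∀ i, G i 0 = x.eval (n : K) * ((a i).eval (n : K) * F (n + i)) := by
      intro i; simp [hG]; ring
    simp only [this, ← Finset.mul_sum, hann n, mul_zero]
  have hL : ∑ j ∈ Finset.range (J+1), G 0 j = (adjointApply J a x).eval (n : K) * F n := by
    simp [hG, adjointApply, eval_finset_sum, Finset.sum_mul]
  have hS1 : ∑ i ∈ Finset.range (J+1), ∑ j ∈ Finset.range (J - i + 1), G i j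
      = ∑ i ∈ Finset.range (J+1), G i 0 + ∑ i ∈ Finset.range (J+1), ∑ j ∈ Finset.Icc 1 (J - i), G i j := by
    rw [← Finset.sum_add_distrib]
    exact Finset.sum_congr rfl fun i _ => peel0 _ _
  have hS2 : ∑ i ∈ Finset.range (J+1), ∑ j ∈ Finset.range (J - i + 1), G i j
      = ∑ i ∈ Finset.range J, ∑ j ∈ Finset.range (J - (i+1) + 1), G (i+1) j
        + ∑ j ∈ Finset.range (J - 0 + 1), G 0 j := by
    rw [Finset.sum_range_succ']
  rw [hT1, hT2]
  have h0 : ∑ j ∈ Finset.range (J - 0 + 1), G 0 j = ∑ j ∈ Finset.range (J+1), G 0 j := by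
    norm_num
  rw [h0] at hS2
  rw [← hL]
  linear_combination hA + hS1 - hS2

/-- If `L = ∑_{i=0}^J a_i(n) σ^i` annihilates `F`, then for every polynomial
`x` and every `n ∈ ℕ`,
`L*(x)(n)·F(n) = ∑_{i=0}^{J-1} u_i(n)F(n+i) - ∑_{i=0}^{J-1} u_i(n+1)F(n+1+i)`, where
`u_i(n) = ∑_{j=1}^{J-i} a_{i+j}(n-j)·x(n-j)`.  In particular `L*(x)(n)·F(n)` is summable. -/
theorem adjoint_mul_summable {K : Type*} [Field K] [CharZero K]
    (F : ℕ → K) (J : ℕ) (a : ℕ → K[X]) (hann : Annihilates J a F) (x : K[X]) :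
    (∀ n : ℕ,
      (adjointApply J a x).eval (n : K) * F n =
        (∑ i ∈ Finset.range J,
            (∑ j ∈ Finset.Icc 1 (J - i),
              (a (i + j)).eval ((n : K) - (j : K)) * x.eval ((n : K) - (j : K))) * F (n + i)) -
          ∑ i ∈ Finset.range J,
            (∑ j ∈ Finset.Icc 1 (J - i),
              (a (i + j)).eval (((n : K) + 1) - (j : K)) * x.eval (((n : K) + 1) - (j : K))) *
              F (n + 1 + i)) ∧
      IsSummableRat J F (adjointApply J a x) 1 := by
  refine ⟨key_adjoint F J a hann x, ?_⟩
  refine ⟨fun i => -(∑ j ∈ Finset.Icc 1 (J - i),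
      (a (i + j)).comp (X - C (j : K)) * x.comp (X - C (j : K))), fun _ => 1,
    fun _ _ => one_ne_zero, fun n _ _ => ?_⟩
  have hk := key_adjoint F J a hann x n
  simp only [eval_one, div_one, eval_neg, eval_finset_sum, eval_mul, eval_comp, eval_sub,
    eval_X, eval_C, neg_mul, Finset.sum_neg_distrib]
  linear_combination hk
end

section
/- The Domb numbers satisfy the three-term recurrence (n+2)³·Domb(n+2) = 2(2n+3)(5n²+15n+12)·Domb(n+1) − 64(n+1)³·Domb(n) for all n ∈ ℕ. Equivalently, the operator 8(n+2)³σ² − (2n+3)(5n²+15n+12)σ + 2(n+1)³ annihilates the sequence F(n) = Domb(n)/16ⁿ. -/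
open Finset

/-- The Domb numbers `Domb(n) = ∑_{k=0}^n binom(n,k)² binom(2k,k) binom(2(n-k),n-k)`. -/
def Domb (n : ℕ) : ℕ :=
  ∑ k ∈ Finset.range (n + 1),
    (n.choose k) ^ 2 * ((2 * k).choose k) * ((2 * (n - k)).choose (n - k))

/-- Summand of the Domb numbers. -/
def Tt (n k : ℕ) : ℕ :=
  (n.choose k) ^ 2 * ((2 * k).choose k) * ((2 * (n - k)).choose (n - k))

/-- Polynomial part of the Zeilberger certificate. -/
def Mq (n k : ℕ) : ℚ :=
  (-56 + 74*(k:ℚ) - 30*(k:ℚ)^2 + 4*(k:ℚ)^3)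
  + (n:ℚ) * (-216 + 237*(k:ℚ) - 78*(k:ℚ)^2 + 8*(k:ℚ)^3)
  + (n:ℚ)^2 * (-326 + 278*(k:ℚ) - 66*(k:ℚ)^2 + 4*(k:ℚ)^3)
  + (n:ℚ)^3 * (-240 + 141*(k:ℚ) - 18*(k:ℚ)^2)
  + (n:ℚ)^4 * (-86 + 26*(k:ℚ))
  - 12*(n:ℚ)^5

/-- The Zeilberger certificate for the Domb recurrence. -/
def gg (n k : ℕ) : ℚ :=
  (k:ℚ)^3 * Mq n k * (((n+2).choose k : ℚ))^2 * (((2*k).choose k : ℚ))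
    * (((2*(n+2-k)).choose (n+2-k) : ℚ))
    / (((n:ℚ)+1)^2 * ((n:ℚ)+2)^2 * (2*(n:ℚ) - 2*(k:ℚ) + 3))

lemma cast_choose_eq (a b c : ℕ) (h : c = a + b) :
    (c.choose a : ℚ) = (c.factorial : ℚ) / ((a.factorial : ℚ) * (b.factorial : ℚ)) := by
  subst h
  rw [Nat.cast_choose ℚ (Nat.le_add_right a b), Nat.add_sub_cancel_left]

set_option maxHeartbeats 4000000 in
lemma main_step (k j : ℕ) :
    (((k+j : ℕ):ℚ)+2)^3 * (Tt (k+j+2) k : ℚ)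
      - 2*(2*((k+j : ℕ):ℚ)+3)*(5*((k+j : ℕ):ℚ)^2+15*((k+j : ℕ):ℚ)+12) * (Tt (k+j+1) k : ℚ)
      + 64*(((k+j : ℕ):ℚ)+1)^3 * (Tt (k+j) k : ℚ)
    = gg (k+j) (k+1) - gg (k+j) k := by
  have fk : ((k+1).factorial : ℚ) = ((k:ℚ)+1) * k.factorial := by
    rw [Nat.factorial_succ]; push_cast; ring
  have fj1 : ((j+1).factorial : ℚ) = ((j:ℚ)+1) * j.factorial := by
    rw [Nat.factorial_succ]; push_cast; ring
  have fj2 : ((j+2).factorial : ℚ) = ((j:ℚ)+2) * (((j:ℚ)+1) * j.factorial) := by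
    rw [show j+2 = (j+1)+1 from rfl, Nat.factorial_succ, Nat.factorial_succ]; push_cast; ring
  have fn1 : ((k+j+1).factorial : ℚ) = ((k:ℚ)+(j:ℚ)+1) * (k+j).factorial := by
    rw [Nat.factorial_succ]; push_cast; ring
  have fn2 : ((k+j+2).factorial : ℚ)
      = ((k:ℚ)+(j:ℚ)+2) * (((k:ℚ)+(j:ℚ)+1) * (k+j).factorial) := by
    rw [show k+j+2 = (k+j+1)+1 from rfl, Nat.factorial_succ, Nat.factorial_succ]
    push_cast; ring
  have f2k : ((2*(k+1)).factorial : ℚ)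
      = (2*(k:ℚ)+2) * ((2*(k:ℚ)+1) * (2*k).factorial) := by
    rw [show 2*(k+1) = (2*k+1)+1 from by ring, Nat.factorial_succ,
      show 2*k+1 = (2*k)+1 from rfl, Nat.factorial_succ]
    push_cast; ring
  have f2j1 : ((2*(j+1)).factorial : ℚ)
      = (2*(j:ℚ)+2) * ((2*(j:ℚ)+1) * (2*j).factorial) := by
    rw [show 2*(j+1) = (2*j+1)+1 from by ring, Nat.factorial_succ,
      show 2*j+1 = (2*j)+1 from rfl, Nat.factorial_succ]
    push_cast; ring
  have f2j2 : ((2*(j+2)).factorial : ℚ)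
      = (2*(j:ℚ)+4) * ((2*(j:ℚ)+3) * ((2*(j:ℚ)+2) * ((2*(j:ℚ)+1) * (2*j).factorial))) := by
    rw [show 2*(j+2) = (2*j+3)+1 from by ring, Nat.factorial_succ,
      show 2*j+3 = (2*j+2)+1 from rfl, Nat.factorial_succ,
      show 2*j+2 = (2*j+1)+1 from rfl, Nat.factorial_succ,
      show 2*j+1 = (2*j)+1 from rfl, Nat.factorial_succ]
    push_cast; ring
  have e1 : (((k+j).choose k : ℕ) : ℚ)
      = (k+j).factorial / (k.factorial * j.factorial) := cast_choose_eq k j _ rfl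
  have e2 : (((k+j+1).choose k : ℕ) : ℚ)
      = (((k:ℚ)+(j:ℚ)+1) * (k+j).factorial) / (k.factorial * (((j:ℚ)+1) * j.factorial)) := by
    rw [cast_choose_eq k (j+1) _ (by omega), fn1, fj1]
  have e3 : (((k+j+2).choose k : ℕ) : ℚ)
      = (((k:ℚ)+(j:ℚ)+2) * (((k:ℚ)+(j:ℚ)+1) * (k+j).factorial))
        / (k.factorial * (((j:ℚ)+2) * (((j:ℚ)+1) * j.factorial))) := by
    rw [cast_choose_eq k (j+2) _ (by omega), fn2, fj2]
  have e4 : (((k+j+2).choose (k+1) : ℕ) : ℚ)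
      = (((k:ℚ)+(j:ℚ)+2) * (((k:ℚ)+(j:ℚ)+1) * (k+j).factorial))
        / ((((k:ℚ)+1) * k.factorial) * (((j:ℚ)+1) * j.factorial)) := by
    rw [cast_choose_eq (k+1) (j+1) _ (by omega), fn2, fk, fj1]
  have e5 : (((2*k).choose k : ℕ) : ℚ)
      = (2*k).factorial / (k.factorial * k.factorial) := cast_choose_eq k k _ (by omega)
  have e6 : (((2*(k+1)).choose (k+1) : ℕ) : ℚ)
      = ((2*(k:ℚ)+2) * ((2*(k:ℚ)+1) * (2*k).factorial))
        / ((((k:ℚ)+1) * k.factorial) * (((k:ℚ)+1) * k.factorial)) := by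
    rw [cast_choose_eq (k+1) (k+1) _ (by omega), f2k, fk]
  have e7 : (((2*j).choose j : ℕ) : ℚ)
      = (2*j).factorial / (j.factorial * j.factorial) := cast_choose_eq j j _ (by omega)
  have e8 : (((2*(j+1)).choose (j+1) : ℕ) : ℚ)
      = ((2*(j:ℚ)+2) * ((2*(j:ℚ)+1) * (2*j).factorial))
        / ((((j:ℚ)+1) * j.factorial) * (((j:ℚ)+1) * j.factorial)) := by
    rw [cast_choose_eq (j+1) (j+1) _ (by omega), f2j1, fj1]
  have e9 : (((2*(j+2)).choose (j+2) : ℕ) : ℚ)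
      = ((2*(j:ℚ)+4) * ((2*(j:ℚ)+3) * ((2*(j:ℚ)+2) * ((2*(j:ℚ)+1) * (2*j).factorial))))
        / ((((j:ℚ)+2) * (((j:ℚ)+1) * j.factorial)) * (((j:ℚ)+2) * (((j:ℚ)+1) * j.factorial))) := by
    rw [cast_choose_eq (j+2) (j+2) _ (by omega), f2j2, fj2]
  have hk0 : (k.factorial : ℚ) ≠ 0 := Nat.cast_ne_zero.mpr k.factorial_ne_zero
  have hj0 : (j.factorial : ℚ) ≠ 0 := Nat.cast_ne_zero.mpr j.factorial_ne_zero
  have h2k0 : ((2*k).factorial : ℚ) ≠ 0 := Nat.cast_ne_zero.mpr (2*k).factorial_ne_zero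
  have h2j0 : ((2*j).factorial : ℚ) ≠ 0 := Nat.cast_ne_zero.mpr (2*j).factorial_ne_zero
  have hkj0 : ((k+j).factorial : ℚ) ≠ 0 := Nat.cast_ne_zero.mpr (k+j).factorial_ne_zero
  have p1 : ((k:ℚ)+1) ≠ 0 := by positivity
  have p2 : ((j:ℚ)+1) ≠ 0 := by positivity
  have p3 : ((j:ℚ)+2) ≠ 0 := by positivity
  have p4 : ((k:ℚ)+(j:ℚ)+1) ≠ 0 := by positivity
  have p5 : ((k:ℚ)+(j:ℚ)+2) ≠ 0 := by positivity
  have p6 : (2*(j:ℚ)+3) ≠ 0 := by positivity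
  have p7 : (2*(j:ℚ)+1) ≠ 0 := by positivity
  have d1 : 2*((k:ℚ)+(j:ℚ)) - 2*(k:ℚ) + 3 ≠ 0 := by
    intro h; apply p6; linarith
  have d2 : 2*((k:ℚ)+(j:ℚ)) - 2*((k:ℚ)+1) + 3 ≠ 0 := by
    intro h; apply p7; linarith
  set Q : ℚ := ((k+j).factorial : ℚ)^2 * ((2*k).factorial : ℚ) * ((2*j).factorial : ℚ)
      / ((k.factorial : ℚ)^4 * (j.factorial : ℚ)^4) with hQ
  have hT0 : (Tt (k+j) k : ℚ) = Q := by
    simp only [Tt, show k+j-k = j from by omega]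
    push_cast
    rw [e1, e5, e7, hQ]
    field_simp
  have hT1 : (Tt (k+j+1) k : ℚ)
      = Q * (((k:ℚ)+(j:ℚ)+1)^2 * ((2*(j:ℚ)+2)*(2*(j:ℚ)+1)) / ((j:ℚ)+1)^4) := by
    simp only [Tt, show k+j+1-k = j+1 from by omega]
    push_cast
    rw [e2, e5, e8, hQ]
    field_simp
  have hT2 : (Tt (k+j+2) k : ℚ)
      = Q * ((((k:ℚ)+(j:ℚ)+2)*((k:ℚ)+(j:ℚ)+1))^2
        * ((2*(j:ℚ)+4)*(2*(j:ℚ)+3)*(2*(j:ℚ)+2)*(2*(j:ℚ)+1))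
        / (((j:ℚ)+2)*((j:ℚ)+1))^4) := by
    simp only [Tt, show k+j+2-k = j+2 from by omega]
    push_cast
    rw [e3, e5, e9, hQ]
    field_simp
  have hg0 : gg (k+j) k
      = Q * ((k:ℚ)^3 * Mq (k+j) k * ((2*(j:ℚ)+4)*(2*(j:ℚ)+2)*(2*(j:ℚ)+1))
        / (((j:ℚ)+2)*((j:ℚ)+1))^4) := by
    simp only [gg, show k+j+2-k = j+2 from by omega]
    push_cast
    rw [e3, e5, e9, hQ]
    field_simp
    ring_nf
    field_simp
    ring
  have hg1 : gg (k+j) (k+1)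
      = Q * (((k:ℚ)+1)^3 * Mq (k+j) (k+1)
        * ((2*(k:ℚ)+2)*(2*(k:ℚ)+1)*(2*(j:ℚ)+2)) / (((k:ℚ)+1)^4 * ((j:ℚ)+1)^4)) := by
    simp only [gg, show k+j+2-(k+1) = j+1 from by omega]
    push_cast
    rw [e4, e6, e8, hQ]
    field_simp
    ring_nf
    field_simp
    ring
  rw [hT0, hT1, hT2, hg0, hg1]
  simp only [Mq]
  push_cast
  field_simp
  ring

lemma bstep1 (n : ℕ) :
    (((n : ℕ):ℚ)+2)^3 * (Tt (n+2) (n+1) : ℚ)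
      - 2*(2*((n : ℕ):ℚ)+3)*(5*((n : ℕ):ℚ)^2+15*((n : ℕ):ℚ)+12) * (Tt (n+1) (n+1) : ℚ)
      + 64*(((n : ℕ):ℚ)+1)^3 * (Tt n (n+1) : ℚ)
    = gg n (n+1+1) - gg n (n+1) := by
  have hf1 : ((n+2).factorial : ℚ) = ((n:ℚ)+2) * ((n+1).factorial : ℚ) := by
    rw [show n+2 = (n+1)+1 from rfl, Nat.factorial_succ]; push_cast; ring
  have hf2 : ((2*(n+2)).factorial : ℚ)
      = (2*(n:ℚ)+4) * ((2*(n:ℚ)+3) * ((2*(n+1)).factorial : ℚ)) := by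
    rw [show 2*(n+2) = (2*(n+1)+1)+1 from by ring, Nat.factorial_succ, Nat.factorial_succ]
    push_cast; ring
  have hB1 : (((2*(n+1)).choose (n+1) : ℕ) : ℚ)
      = ((2*(n+1)).factorial : ℚ) / (((n+1).factorial : ℚ) * ((n+1).factorial : ℚ)) :=
    cast_choose_eq (n+1) (n+1) _ (by omega)
  have hB2 : (((2*(n+2)).choose (n+2) : ℕ) : ℚ)
      = ((2*(n:ℚ)+4) * ((2*(n:ℚ)+3) * ((2*(n+1)).factorial : ℚ)))
        / ((((n:ℚ)+2) * ((n+1).factorial : ℚ)) * (((n:ℚ)+2) * ((n+1).factorial : ℚ))) := by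
    rw [cast_choose_eq (n+2) (n+2) _ (by omega), hf2, hf1]
  have hcs : (n+2).choose (n+1) = n+2 := by
    rw [show n+2 = (n+1)+1 from rfl, Nat.choose_succ_self_right]
  have hz : Tt n (n+1) = 0 := by
    simp [Tt, Nat.choose_eq_zero_of_lt (show n < n+1 by omega)]
  have hfn0 : (((n+1).factorial : ℚ)) ≠ 0 := Nat.cast_ne_zero.mpr (n+1).factorial_ne_zero
  have hfn1 : (((2*(n+1)).factorial : ℚ)) ≠ 0 := Nat.cast_ne_zero.mpr (2*(n+1)).factorial_ne_zero
  have p1 : ((n:ℚ)+1) ≠ 0 := by positivity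
  have p2 : ((n:ℚ)+2) ≠ 0 := by positivity
  have d1 : 2*(n:ℚ) - 2*((n:ℚ)+1) + 3 ≠ 0 := by intro h; nlinarith [h]
  have d2 : 2*(n:ℚ) - 2*((n:ℚ)+1+1) + 3 ≠ 0 := by intro h; nlinarith [h]
  rw [hz]
  simp only [Tt, gg, Mq, hz, hcs, show (n+2)-(n+1) = 1 from by omega,
    show (n+1)-(n+1) = 0 from by omega, show n+2-(n+1) = 1 from by omega,
    show n+2-(n+1+1) = 0 from by omega, show (2:ℕ)*1 = 2 from rfl,
    show (2:ℕ)*0 = 0 from rfl, Nat.choose_self, Nat.choose_zero_right,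
    Nat.choose_one_right]
  push_cast
  rw [hB1, hB2]
  field_simp
  ring

lemma bstep2 (n : ℕ) :
    (((n : ℕ):ℚ)+2)^3 * (Tt (n+2) (n+2) : ℚ)
      - 2*(2*((n : ℕ):ℚ)+3)*(5*((n : ℕ):ℚ)^2+15*((n : ℕ):ℚ)+12) * (Tt (n+1) (n+2) : ℚ)
      + 64*(((n : ℕ):ℚ)+1)^3 * (Tt n (n+2) : ℚ)
    = gg n (n+2+1) - gg n (n+2) := by
  have hz1 : Tt n (n+2) = 0 := by
    simp [Tt, Nat.choose_eq_zero_of_lt (show n < n+2 by omega)]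
  have hz2 : Tt (n+1) (n+2) = 0 := by
    simp [Tt, Nat.choose_eq_zero_of_lt (show n+1 < n+2 by omega)]
  have hz3 : (n+2).choose (n+2+1) = 0 :=
    Nat.choose_eq_zero_of_lt (show n+2 < n+2+1 by omega)
  have p1 : ((n:ℚ)+1) ≠ 0 := by positivity
  have p2 : ((n:ℚ)+2) ≠ 0 := by positivity
  have d2 : 2*(n:ℚ) - 2*((n:ℚ)+2) + 3 ≠ 0 := by intro h; nlinarith [h]
  rw [hz1, hz2]
  simp only [Tt, gg, Mq, hz3, show (n+2)-(n+2) = 0 from by omega,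
    show n+2-(n+2) = 0 from by omega, show n+2-(n+2+1) = 0 from by omega,
    show (2:ℕ)*0 = 0 from rfl, Nat.choose_self, Nat.choose_zero_right]
  push_cast
  field_simp
  ring

lemma step (n k : ℕ) (hk : k < n+3) :
    (((n : ℕ):ℚ)+2)^3 * (Tt (n+2) k : ℚ)
      - 2*(2*((n : ℕ):ℚ)+3)*(5*((n : ℕ):ℚ)^2+15*((n : ℕ):ℚ)+12) * (Tt (n+1) k : ℚ)
      + 64*(((n : ℕ):ℚ)+1)^3 * (Tt n k : ℚ)
    = gg n (k+1) - gg n k := by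
  rcases Nat.lt_or_ge k (n+1) with h | h
  · obtain ⟨j, rfl⟩ := Nat.exists_eq_add_of_le (Nat.lt_succ_iff.mp h)
    exact main_step k j
  · have hk' : k = n+1 ∨ k = n+2 := by omega
    rcases hk' with rfl | rfl
    · exact bstep1 n
    · exact bstep2 n

lemma key (n : ℕ) :
    ((n:ℚ)+2)^3 * (Domb (n+2) : ℚ)
      - 2*(2*(n:ℚ)+3)*(5*(n:ℚ)^2+15*(n:ℚ)+12) * (Domb (n+1) : ℚ)
      + 64*((n:ℚ)+1)^3 * (Domb n : ℚ) = 0 := by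
  have hD : ∀ m : ℕ, ((Domb m : ℚ)) = ∑ k ∈ range (m+1), (Tt m k : ℚ) := by
    intro m; simp [Domb, Tt]
  have hz1 : Tt n (n+1) = 0 := by
    simp [Tt, Nat.choose_eq_zero_of_lt (show n < n+1 by omega)]
  have hz2 : Tt n (n+2) = 0 := by
    simp [Tt, Nat.choose_eq_zero_of_lt (show n < n+2 by omega)]
  have hz3 : Tt (n+1) (n+2) = 0 := by
    simp [Tt, Nat.choose_eq_zero_of_lt (show n+1 < n+2 by omega)]
  have hD2 : (Domb (n+2) : ℚ) = ∑ k ∈ range (n+3), (Tt (n+2) k : ℚ) := by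
    rw [show n+3 = (n+2)+1 from rfl]; exact hD (n+2)
  have hD1 : (Domb (n+1) : ℚ) = ∑ k ∈ range (n+3), (Tt (n+1) k : ℚ) := by
    rw [show n+3 = (n+2)+1 from rfl, Finset.sum_range_succ, hz3]
    push_cast
    rw [add_zero]
    exact hD (n+1)
  have hD0 : (Domb n : ℚ) = ∑ k ∈ range (n+3), (Tt n k : ℚ) := by
    rw [show n+3 = (n+2)+1 from rfl, Finset.sum_range_succ, hz2,
      show n+2 = (n+1)+1 from rfl, Finset.sum_range_succ, hz1]
    push_cast
    rw [add_zero, add_zero]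
    exact hD n
  have g0 : gg n 0 = 0 := by simp [gg]
  have gtop : gg n (n+3) = 0 := by
    have : (n+2).choose (n+3) = 0 := Nat.choose_eq_zero_of_lt (by omega)
    simp [gg, this]
  have hsum : ∑ k ∈ range (n+3),
      ((((n : ℕ):ℚ)+2)^3 * (Tt (n+2) k : ℚ)
        - 2*(2*((n : ℕ):ℚ)+3)*(5*((n : ℕ):ℚ)^2+15*((n : ℕ):ℚ)+12) * (Tt (n+1) k : ℚ)
        + 64*(((n : ℕ):ℚ)+1)^3 * (Tt n k : ℚ))
      = ∑ k ∈ range (n+3), (gg n (k+1) - gg n k) :=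
    Finset.sum_congr rfl (fun k hk => step n k (Finset.mem_range.mp hk))
  have tele : ∑ k ∈ range (n+3), (gg n (k+1) - gg n k) = gg n (n+3) - gg n 0 :=
    Finset.sum_range_sub (gg n) (n+3)
  rw [hD2, hD1, hD0, Finset.mul_sum, Finset.mul_sum, Finset.mul_sum,
    ← Finset.sum_sub_distrib, ← Finset.sum_add_distrib, hsum, tele, g0, gtop]
  ring

/-- The Domb numbers satisfy the three-term recurrence
`(n+2)³ Domb(n+2) = 2(2n+3)(5n²+15n+12) Domb(n+1) - 64(n+1)³ Domb(n)`; equivalently, the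
operator `8(n+2)³σ² - (2n+3)(5n²+15n+12)σ + 2(n+1)³` annihilates `F(n) = Domb(n)/16ⁿ`. -/
theorem domb_recurrence :
    (∀ n : ℕ, ((n : ℤ) + 2) ^ 3 * Domb (n + 2) =
      2 * (2 * (n : ℤ) + 3) * (5 * (n : ℤ) ^ 2 + 15 * (n : ℤ) + 12) * Domb (n + 1) -
        64 * ((n : ℤ) + 1) ^ 3 * Domb n) ∧
    (∀ n : ℕ, 8 * ((n : ℚ) + 2) ^ 3 * ((Domb (n + 2) : ℚ) / 16 ^ (n + 2)) -
        (2 * (n : ℚ) + 3) * (5 * (n : ℚ) ^ 2 + 15 * (n : ℚ) + 12) *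
          ((Domb (n + 1) : ℚ) / 16 ^ (n + 1)) +
        2 * ((n : ℚ) + 1) ^ 3 * ((Domb n : ℚ) / 16 ^ n) = 0) := by
  constructor
  · intro n
    have h := key n
    have h' : ((n:ℚ)+2)^3 * (Domb (n+2) : ℚ)
        = 2*(2*(n:ℚ)+3)*(5*(n:ℚ)^2+15*(n:ℚ)+12) * (Domb (n+1) : ℚ)
          - 64*((n:ℚ)+1)^3 * (Domb n : ℚ) := by linarith
    exact_mod_cast h'
  · intro n
    have h := key n
    have h16 : (16:ℚ)^n ≠ 0 := pow_ne_zero _ (by norm_num)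
    rw [pow_succ, pow_succ]
    field_simp
    linear_combination (128 * (16:ℚ)^(n*2)) * h
end
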